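/- arXiv:2311.04895 — 9 statements merged into one kernel-verified Lean document; each statement's English description precedes it below -/
import Mathlib

section
/- For x, y ∈ ℝ^d, if every integer vector b with b·x ∈ ℤ also satisfies b·y ∈ ℤ, then for every ε > 0 there exist infinitely many n ∈ ℕ such that the sum over j of the distances from n·x_j − y_j to the nearest integer is less than ε. -/
/-!
Put `z₀ = 1` and `zⱼ = e(n xⱼ - yⱼ)` with `e(t) = exp(2πit)`, and `F(n) = z₀ + ⋯ + z_d`. If
`|F(n)| > d + 1 - δ`, then `|1 + zⱼ| > 2 - δ` for every `j`, so each `n xⱼ - yⱼ` is within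
`O(√δ)` of an integer; it therefore suffices that `|F(n)|` comes arbitrarily close to `d + 1`
for arbitrarily large `n`.

Expand `|F(n)|^{2k} = |F(n)^k|²` over pairs of `k`-tuples of indices. A pair whose frequencies
agree modulo `1` contributes a constant, which is `1` by the hypothesis on `x` and `y`; any
other pair contributes a geometric progression in `n` with bounded partial sums. So the mean of
`|F(n)|^{2k}` over long windows of `n` is at least the number of pairs with equal frequencies,
and since the frequency of a tuple only depends on how often each index occurs in it,
Cauchy–Schwarz bounds this number below by `(d + 1)^{2k} / (k + 1)^{d + 1}`. Its `2k`-th root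
tends to `d + 1` as `k → ∞`.
-/

open Finset Real FourierTransform Filter

lemma fourierChar_eq_one_iff {t : ℝ} : 𝐞 t = 1 ↔ ∃ m : ℤ, t = m := by
  rw [fourierChar_apply', Circle.exp_eq_one]
  refine exists_congr fun m => ?_
  constructor <;> intro h
  · nlinarith [pi_pos]
  · rw [h]; ring

lemma coe_fourierChar_sum {κ : Type*} (s : Finset κ) (f : κ → ℝ) :
    (𝐞 (∑ i ∈ s, f i) : ℂ) = ∏ i ∈ s, (𝐞 (f i) : ℂ) := by
  classical
  induction s using Finset.induction_on with
  | empty => simp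
  | insert i s hi ih =>
    rw [sum_insert hi, prod_insert hi, AddChar.map_add_eq_mul, Circle.coe_mul, ih]

lemma coe_fourierChar_nat_mul_sub (n : ℕ) (θ c : ℝ) :
    (𝐞 (n * θ - c) : ℂ) = 𝐞 (-c) * (𝐞 θ : ℂ) ^ n := by
  rw [sub_eq_add_neg, AddChar.map_add_eq_mul, ← nsmul_eq_mul, AddChar.map_nsmul_eq_pow,
    Circle.coe_mul, Circle.coe_pow, mul_comm]

lemma four_mul_abs_sub_round_le_norm_fourierChar_sub_one (t : ℝ) :
    4 * |t - round t| ≤ ‖(𝐞 t : ℂ) - 1‖ := by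
  set s := t - round t
  have hs : 𝐞 t = 𝐞 s := by
    rw [show t = s + round t by ring, AddChar.map_add_eq_mul,
      fourierChar_eq_one_iff.2 ⟨round t, rfl⟩, mul_one]
  have hsin : 2 / π * |π * s| ≤ |sin (π * s)| := by
    refine mul_abs_le_abs_sin ?_
    rw [abs_mul, abs_of_pos pi_pos]
    nlinarith [abs_sub_round t, pi_pos]
  rw [abs_mul, abs_of_pos pi_pos, ← mul_assoc, div_mul_cancel₀ _ pi_ne_zero] at hsin
  rw [hs, fourierChar_apply, mul_comm _ Complex.I, Complex.norm_exp_I_mul_ofReal_sub_one,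
    norm_mul, Real.norm_ofNat, Real.norm_eq_abs, show 2 * π * s / 2 = π * s by ring]
  linarith

lemma norm_sub_sq_lt_of_card_sub_lt_norm_sum {ι : Type*} [Fintype ι] {z : ι → ℂ}
    (hz : ∀ i, ‖z i‖ = 1) {δ : ℝ} (h : Fintype.card ι - δ < ‖∑ i, z i‖) (i j : ι) :
    ‖z i - z j‖ ^ 2 < 4 * δ := by
  classical
  have hnorm : ∀ s : Finset ι, ‖∑ i ∈ s, z i‖ ≤ #s := fun s =>
    (norm_sum_le _ _).trans (by simp [hz])
  by_cases hij : i = j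
  · have := hnorm univ
    simp only [card_univ] at this
    simp only [hij, sub_self, norm_zero]
    linarith
  have hsplit : ∑ i, z i = ∑ k ∈ univ \ {i, j}, z k + (z i + z j) := by
    rw [← sum_pair hij, sum_sdiff (subset_univ _)]
  have hcard : (#(univ \ {i, j}) : ℝ) + 2 = Fintype.card ι := by
    have := card_sdiff_add_card_eq_card (subset_univ ({i, j} : Finset ι))
    rw [card_pair hij, card_univ] at this
    exact_mod_cast this
  have hpair : Fintype.card ι - δ < ‖∑ k ∈ univ \ {i, j}, z k‖ + ‖z i + z j‖ :=
    h.trans_le (hsplit ▸ norm_add_le _ _)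
  have hpar := parallelogram_law_with_norm ℝ (z i) (z j)
  rw [hz, hz] at hpar
  have hle : ‖z i + z j‖ ≤ 2 := (norm_add_le _ _).trans (by simp [hz]; norm_num)
  nlinarith [norm_nonneg (z i + z j), hnorm (univ \ {i, j})]

lemma norm_sum_Ico_pow_le {𝕜 : Type*} [NormedDivisionRing 𝕜] {z : 𝕜} (hz : ‖z‖ ≤ 1)
    (hz1 : z ≠ 1) (L N : ℕ) : ‖∑ n ∈ Ico L (L + N), z ^ n‖ ≤ 2 / ‖z - 1‖ := by
  rw [geom_sum_Ico hz1 (Nat.le_add_right L N), norm_div]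
  gcongr
  calc ‖z ^ (L + N) - z ^ L‖ ≤ ‖z‖ ^ (L + N) + ‖z‖ ^ L := by
        simpa only [norm_pow] using norm_sub_le (z ^ (L + N)) (z ^ L)
    _ ≤ 2 := by
        linarith [pow_le_one₀ (norm_nonneg z) hz (n := L + N),
          pow_le_one₀ (norm_nonneg z) hz (n := L)]

lemma card_sq_le_card_mul_card_filter_eq {G B : Type*} [Fintype G] [Fintype B] [DecidableEq B]
    (κ : G → B) : Fintype.card G ^ 2 ≤ Fintype.card B * #{p : G × G | κ p.1 = κ p.2} := by
  have hG : Fintype.card G = ∑ b, #{g | κ g = b} :=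
    card_eq_sum_card_fiberwise fun g _ => mem_univ (κ g)
  have hcoll : #{p : G × G | κ p.1 = κ p.2} = ∑ b, #{g | κ g = b} ^ 2 := by
    rw [card_eq_sum_card_fiberwise (f := fun p : G × G => κ p.1) fun p _ => mem_univ _]
    refine sum_congr rfl fun b _ => ?_
    rw [sq, ← card_product]
    congr 1
    ext p
    simp only [mem_filter, mem_univ, true_and, mem_product]
    constructor
    · rintro ⟨h, rfl⟩; exact ⟨rfl, h.symm⟩
    · rintro ⟨h1, h2⟩; exact ⟨h1.trans h2.symm, h1⟩
  rw [hG, hcoll]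
  simpa using sq_sum_le_card_mul_sum_sq (s := univ) (f := fun b => #{g | κ g = b})

lemma sum_comp_eq_sum_card_mul {ι κ : Type*} [Fintype ι] [Fintype κ] [DecidableEq ι]
    (g : κ → ι) (a : ι → ℝ) : ∑ j, a (g j) = ∑ i, (#{j | g j = i} : ℝ) * a i := by
  rw [← sum_fiberwise univ g]
  refine sum_congr rfl fun i _ => ?_
  rw [sum_congr rfl fun j hj => by rw [(mem_filter.1 hj).2], sum_const, nsmul_eq_mul]

lemma card_pow_sq_le_card_mul_card_filter_sum_eq {ι : Type*} [Fintype ι] (a : ι → ℝ) (k : ℕ) :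
    (Fintype.card ι ^ k) ^ 2 ≤ (k + 1) ^ Fintype.card ι *
      #{p : (Fin k → ι) × (Fin k → ι) | ∑ j, a (p.1 j) = ∑ j, a (p.2 j)} := by
  classical
  let κ : (Fin k → ι) → ι → Fin (k + 1) := fun g i =>
    ⟨#{j | g j = i}, Nat.lt_succ_of_le ((card_le_univ _).trans_eq (Fintype.card_fin k))⟩
  have hκ : #{p : (Fin k → ι) × (Fin k → ι) | κ p.1 = κ p.2} ≤
      #{p : (Fin k → ι) × (Fin k → ι) | ∑ j, a (p.1 j) = ∑ j, a (p.2 j)} := by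
    refine card_le_card (monotone_filter_right _ fun p _ hp => ?_)
    simp only [sum_comp_eq_sum_card_mul]
    refine sum_congr rfl fun i _ => ?_
    rw [show #{j | p.1 j = i} = #{j | p.2 j = i} from congrArg Fin.val (congrFun hp i)]
  simpa only [Fintype.card_fun, Fintype.card_fin] using
    (card_sq_le_card_mul_card_filter_eq κ).trans (Nat.mul_le_mul_left _ hκ)

lemma exists_pow_mul_pow_lt_one (p : ℕ) {r : ℝ} (h0 : 0 ≤ r) (h1 : r < 1) :
    ∃ k : ℕ, ((k : ℝ) + 1) ^ p * r ^ k < 1 := by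
  have hlim := (tendsto_pow_const_mul_const_pow_of_lt_one p h0 h1).const_mul (2 ^ p)
  rw [mul_zero] at hlim
  obtain ⟨k, hk, hk1⟩ :=
    ((hlim.eventually (gt_mem_nhds one_pos)).and (eventually_ge_atTop 1)).exists
  refine ⟨k, lt_of_le_of_lt ?_ hk⟩
  rw [← mul_assoc, ← mul_pow]
  gcongr
  have : (1 : ℝ) ≤ k := by exact_mod_cast hk1
  linarith

lemma exists_forall_le_re_sum_fourierChar (θ c : ℝ) (h : (∃ m : ℤ, θ = m) → ∃ m : ℤ, c = m) :
    ∃ C, ∀ L N : ℕ, (if θ = 0 then (N : ℝ) else 0) - C ≤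
      (∑ n ∈ Ico L (L + N), (𝐞 (n * θ - c) : ℂ)).re := by
  by_cases hθ : 𝐞 θ = 1
  · obtain ⟨m, hm⟩ := h (fourierChar_eq_one_iff.1 hθ)
    refine ⟨0, fun L N => ?_⟩
    have hc : 𝐞 (-c) = 1 := fourierChar_eq_one_iff.2 ⟨-m, by rw [hm]; push_cast; ring⟩
    simp only [coe_fourierChar_nat_mul_sub, hθ, hc, Circle.coe_one, one_pow, mul_one, sum_const,
      Nat.card_Ico, add_tsub_cancel_left, nsmul_eq_mul, Complex.natCast_re, sub_zero]
    split_ifs <;> simp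
  · refine ⟨2 / ‖(𝐞 θ : ℂ) - 1‖, fun L N => ?_⟩
    have hθ0 : θ ≠ 0 := by rintro rfl; simp at hθ
    rw [if_neg hθ0, zero_sub, neg_le]
    calc -(∑ n ∈ Ico L (L + N), (𝐞 (n * θ - c) : ℂ)).re
        ≤ ‖∑ n ∈ Ico L (L + N), (𝐞 (n * θ - c) : ℂ)‖ :=
          (neg_le_abs _).trans (Complex.abs_re_le_norm _)
      _ = ‖∑ n ∈ Ico L (L + N), (𝐞 θ : ℂ) ^ n‖ := by
        simp only [coe_fourierChar_nat_mul_sub, ← mul_sum, norm_mul, Circle.norm_coe, one_mul]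
      _ ≤ 2 / ‖(𝐞 θ : ℂ) - 1‖ :=
        norm_sum_Ico_pow_le (Circle.norm_coe _).le (by rwa [Ne, Circle.coe_eq_one]) L N

lemma norm_sum_fourierChar_sq {G : Type*} [Fintype G] (α β : G → ℝ) (t : ℝ) :
    ‖∑ g, (𝐞 (t * α g - β g) : ℂ)‖ ^ 2 =
      ∑ p : G × G, (𝐞 (t * (α p.1 - α p.2) - (β p.1 - β p.2)) : ℂ).re := by
  rw [← Complex.re_sum, ← Complex.ofReal_re (_ ^ 2), Complex.ofReal_pow, ← Complex.mul_conj',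
    map_sum, sum_mul_sum, ← Fintype.sum_prod_type']
  congr 1
  refine sum_congr rfl fun p _ => ?_
  rw [Circle.starRingEnd_addChar, ← Circle.coe_mul, ← AddChar.map_add_eq_mul]
  ring_nf

theorem exists_lt_norm_sum_fourierChar_sq {G : Type*} [Fintype G] (α β : G → ℝ)
    (hαβ : ∀ g g', (∃ m : ℤ, α g - α g' = m) → ∃ m : ℤ, β g - β g' = m)
    {A : ℝ} (hA : A < #{p : G × G | α p.1 = α p.2}) (M : ℕ) :
    ∃ n > M, A < ‖∑ g, (𝐞 (n * α g - β g) : ℂ)‖ ^ 2 := by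
  set D : ℝ := ((#{p : G × G | α p.1 = α p.2} : ℕ) : ℝ)
  choose C hC using fun p : G × G =>
    exists_forall_le_re_sum_fourierChar (α p.1 - α p.2) (β p.1 - β p.2) (hαβ p.1 p.2)
  have hmean : ∀ L N : ℕ, N * D - ∑ p, C p ≤
      ∑ n ∈ Ico L (L + N), ‖∑ g, (𝐞 (n * α g - β g) : ℂ)‖ ^ 2 := by
    intro L N
    calc N * D - ∑ p, C p
        = ∑ p : G × G, ((if α p.1 - α p.2 = 0 then (N : ℝ) else 0) - C p) := by
          simp only [D, sum_sub_distrib, natCast_card_filter, mul_sum, sub_eq_zero, mul_ite,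
            mul_one, mul_zero]
      _ ≤ ∑ p : G × G, (∑ n ∈ Ico L (L + N),
            (𝐞 (n * (α p.1 - α p.2) - (β p.1 - β p.2)) : ℂ)).re :=
          sum_le_sum fun p _ => hC p L N
      _ = _ := by simp only [norm_sum_fourierChar_sq, Complex.re_sum]; exact sum_comm
  obtain ⟨N, hN⟩ := exists_nat_gt ((∑ p, C p) / (D - A))
  rw [div_lt_iff₀ (sub_pos.2 hA)] at hN
  by_contra! hle
  have hupper :
      ∑ n ∈ Ico (M + 1) (M + 1 + N), ‖∑ g, (𝐞 (n * α g - β g) : ℂ)‖ ^ 2 ≤ N * A := by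
    calc _ ≤ ∑ n ∈ Ico (M + 1) (M + 1 + N), A :=
          sum_le_sum fun n hn => hle n (mem_Ico.1 hn).1
      _ = N * A := by simp
  linarith [hmean (M + 1) N]

lemma sum_fourierChar_pow {ι : Type*} [Fintype ι] (a b : ι → ℝ) (t : ℝ) (k : ℕ) :
    (∑ i, (𝐞 (t * a i - b i) : ℂ)) ^ k =
      ∑ g : Fin k → ι, (𝐞 (t * ∑ j, a (g j) - ∑ j, b (g j)) : ℂ) := by
  classical
  rw [← Fin.prod_const, Fintype.prod_sum]
  refine sum_congr rfl fun g _ => ?_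
  rw [mul_sum, ← sum_sub_distrib, coe_fourierChar_sum]

def KroneckerCondition {ι : Type*} [Fintype ι] (a b : ι → ℝ) : Prop :=
  ∀ c : ι → ℤ, (∃ m : ℤ, ∑ i, (c i : ℝ) * a i = m) → ∃ m : ℤ, ∑ i, (c i : ℝ) * b i = m

namespace KroneckerCondition

variable {ι : Type*} [Fintype ι] {a b : ι → ℝ}

lemma option_elim (h : KroneckerCondition a b) :
    KroneckerCondition (fun o : Option ι => o.elim 0 a) (fun o => o.elim 0 b) := by
  intro c hc
  simpa [Fintype.sum_option] using h (c ∘ some) (by simpa [Fintype.sum_option] using hc)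

lemma sum_comp_sub_sum_comp {κ : Type*} [Fintype κ] (h : KroneckerCondition a b) (g g' : κ → ι)
    (hg : ∃ m : ℤ, ∑ j, a (g j) - ∑ j, a (g' j) = m) :
    ∃ m : ℤ, ∑ j, b (g j) - ∑ j, b (g' j) = m := by
  classical
  set c : ι → ℤ := fun i => #{j | g j = i} - #{j | g' j = i}
  have hc : ∀ v : ι → ℝ, ∑ j, v (g j) - ∑ j, v (g' j) = ∑ i, (c i : ℝ) * v i := fun v => by
    simp only [sum_comp_eq_sum_card_mul, c, Int.cast_sub, Int.cast_natCast, sub_mul,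
      sum_sub_distrib]
  simpa only [hc] using h c (by simpa only [hc] using hg)

theorem exists_lt_norm_sum_fourierChar (h : KroneckerCondition a b) {A : ℝ}
    (hA : A < Fintype.card ι) (M : ℕ) : ∃ n > M, A < ‖∑ i, (𝐞 (n * a i - b i) : ℂ)‖ := by
  rcases lt_or_ge A 0 with hA0 | hA0
  · exact ⟨M + 1, by omega, hA0.trans_le (norm_nonneg _)⟩
  set q := Fintype.card ι
  have hq : (0 : ℝ) < q := hA0.trans_lt hA
  obtain ⟨k, hk⟩ := exists_pow_mul_pow_lt_one q (r := (A / q) ^ 2) (by positivity)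
    (by rw [sq_lt_one_iff₀ (by positivity), div_lt_one hq]; exact hA)
  set D : ℕ := #{p : (Fin k → ι) × (Fin k → ι) | ∑ j, a (p.1 j) = ∑ j, a (p.2 j)}
  have hcoll : ((q : ℝ) ^ k) ^ 2 ≤ ((k : ℝ) + 1) ^ q * D := by
    exact_mod_cast card_pow_sq_le_card_mul_card_filter_sum_eq a k
  have hAk : A ^ (2 * k) < D := by
    refine lt_of_mul_lt_mul_left ?_ (by positivity : (0 : ℝ) ≤ ((k : ℝ) + 1) ^ q)
    calc ((k : ℝ) + 1) ^ q * A ^ (2 * k)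
        = ((k : ℝ) + 1) ^ q * ((A / q) ^ 2) ^ k * ((q : ℝ) ^ k) ^ 2 := by
          rw [mul_assoc, ← pow_mul, ← pow_mul, mul_comm k 2, ← mul_pow, div_mul_cancel₀ A hq.ne']
      _ < ((q : ℝ) ^ k) ^ 2 := mul_lt_of_lt_one_left (by positivity) hk
      _ ≤ _ := hcoll
  obtain ⟨n, hnM, hn⟩ := exists_lt_norm_sum_fourierChar_sq (fun g : Fin k → ι => ∑ j, a (g j))
    (fun g => ∑ j, b (g j)) h.sum_comp_sub_sum_comp hAk M
  rw [← sum_fourierChar_pow a b n k, norm_pow, ← pow_mul, mul_comm] at hn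
  exact ⟨n, hnM, lt_of_pow_lt_pow_left₀ (k * 2) (norm_nonneg _) hn⟩

end KroneckerCondition

open Finset in
/-- **Kronecker's theorem.** If every integer vector `b` with `b·x ∈ ℤ` also satisfies
`b·y ∈ ℤ`, then for every `ε > 0` there are infinitely many `n` with
`∑ⱼ [[n xⱼ - yⱼ]] < ε`, where `[[t]]` is the distance from `t` to the nearest integer. -/
theorem kronecker_simultaneous (d : ℕ) (x y : Fin d → ℝ)
    (h : ∀ b : Fin d → ℤ, (∃ m : ℤ, ∑ j, (b j : ℝ) * x j = (m : ℝ)) →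
      ∃ m : ℤ, ∑ j, (b j : ℝ) * y j = (m : ℝ)) :
    ∀ ε : ℝ, 0 < ε →
      {n : ℕ | ∑ j, |(n : ℝ) * x j - y j - round ((n : ℝ) * x j - y j)| < ε}.Infinite := by
  intro ε hε
  set η : ℝ := ε / (d + 1)
  have hη : 0 < η := by positivity
  refine Set.infinite_of_forall_exists_gt fun M => ?_
  -- `4 η ^ 2` is chosen so that `‖e(n xⱼ - yⱼ) - 1‖ < 4 η`.
  obtain ⟨n, hnM, hn⟩ := KroneckerCondition.exists_lt_norm_sum_fourierChar
    (KroneckerCondition.option_elim h) (A := Fintype.card (Option (Fin d)) - 4 * η ^ 2)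
    (by simp only [sub_lt_self_iff]; positivity) M
  have hcoord : ∀ j, |(n : ℝ) * x j - y j - round ((n : ℝ) * x j - y j)| < η := by
    intro j
    have hnear := norm_sub_sq_lt_of_card_sub_lt_norm_sum (fun _ => Circle.norm_coe _) hn
      (some j) none
    simp only [Option.elim_some, Option.elim_none, mul_zero, sub_zero, AddChar.map_zero_eq_one,
      Circle.coe_one] at hnear
    have := four_mul_abs_sub_round_le_norm_fourierChar_sub_one ((n : ℝ) * x j - y j)
    nlinarith [abs_nonneg ((n : ℝ) * x j - y j - round ((n : ℝ) * x j - y j))]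
  refine ⟨n, ?_, hnM⟩
  calc ∑ j, |(n : ℝ) * x j - y j - round ((n : ℝ) * x j - y j)| ≤ ∑ _j : Fin d, η :=
        sum_le_sum fun j _ => (hcoord j).le
    _ = d * η := by simp
    _ < ε := by
        rw [mul_div_assoc', div_lt_iff₀ (by positivity)]
        linarith
end

section
/- Let Γ = (γ_1,…,γ_d) ∈ 𝕋^d and let z ∈ 𝕋^d satisfy G(Γ) ⊆ G(z). Then for every open set O ⊆ 𝕋^d containing z, there exist infinitely many n ∈ ℕ with Γ^n ∈ O. -/
/-!
Let `H` be the closure of the subgroup generated by `Γ`, with Haar measure `μ`. For every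
character `χ_a(x) = ∏ x_j ^ a_j` of `𝕋^d` one has `∫ χ_a(z h) dμ = ∫ χ_a(h) dμ`: if
`χ_a(Γ) = 1` then `χ_a(z) = 1` by hypothesis, and otherwise both integrals vanish by invariance.
The characters span a point-separating star subalgebra, so the push-forwards of `μ` under
`h ↦ z h` and `h ↦ h` agree; comparing their masses on `H` gives `z ∈ H`. In a compact group
the points of `H` are exactly the cluster points of the forward orbit `(Γ ^ n)`.
-/

open MeasureTheory Set
open scoped BoundedContinuousFunction

section Haar

theorem integral_eq_zero_of_apply_ne_one {K : Type*} [Group K] [MeasurableSpace K]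
    [MeasurableMul K] (μ : Measure K) [μ.IsMulLeftInvariant] {f : K → ℂ}
    (hf : ∀ x y, f (x * y) = f x * f y) {k : K} (hk : f k ≠ 1) : ∫ x, f x ∂μ = 0 := by
  have htrans := integral_mul_left_eq_self (μ := μ) f k
  simp only [hf, integral_const_mul] at htrans
  have : (f k - 1) * ∫ x, f x ∂μ = 0 := by rw [sub_mul, htrans, one_mul, sub_self]
  exact (mul_eq_zero.mp this).resolve_left (sub_ne_zero.mpr hk)

variable {G : Type*} [Group G]

theorem Subgroup.integral_mul_left_eq_of_apply_eq_one (H : Subgroup G) [MeasurableSpace H]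
    [MeasurableMul H] (μ : Measure H) [μ.IsMulLeftInvariant] {f : G → ℂ}
    (hf : ∀ x y, f (x * y) = f x * f y) {γ : G} (hγ : γ ∈ H) {z : G} (hz : f γ = 1 → f z = 1) :
    ∫ x : H, f (z * x) ∂μ = ∫ x : H, f x ∂μ := by
  simp only [hf, integral_const_mul]
  by_cases hγ1 : f γ = 1
  · rw [hz hγ1, one_mul]
  · rw [integral_eq_zero_of_apply_ne_one μ (f := fun x : H => f x) (fun x y => hf x y)
      (k := ⟨γ, hγ⟩) hγ1, mul_zero]

variable [TopologicalSpace G] [IsTopologicalGroup G] [T2Space G] [MeasurableSpace G]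
  [BorelSpace G]

theorem Subgroup.mem_of_map_mul_left_haar_eq (H : Subgroup G) [CompactSpace H] {z : G}
    (h : (Measure.haar : Measure H).map (fun x : H => z * (x : G)) =
      (Measure.haar : Measure H).map (↑)) :
    z ∈ H := by
  have hH : MeasurableSet (H : Set G) :=
    (isCompact_iff_compactSpace.mpr ‹_›).isClosed.measurableSet
  have hmap := congrArg (fun μ : Measure G => μ H) h
  rw [Measure.map_apply (by fun_prop) hH, Measure.map_apply (by fun_prop) hH] at hmap
  by_contra hz
  have hempty : (fun x : H => z * x) ⁻¹' (H : Set G) = ∅ := by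
    ext x
    simpa using fun hzx => hz (by simpa using H.mul_mem hzx (H.inv_mem x.2))
  rw [hempty, Subtype.coe_preimage_self, measure_empty] at hmap
  exact (Measure.haar : Measure H).measure_univ_ne_zero.mpr (NeZero.ne _) hmap.symm

end Haar

theorem integral_eq_of_mem_span {E 𝕜 : Type*} [RCLike 𝕜] [TopologicalSpace E] [MeasurableSpace E]
    [OpensMeasurableSpace E] {μ ν : Measure E} [IsFiniteMeasure μ] [IsFiniteMeasure ν]
    {S : Set (E →ᵇ 𝕜)} (h : ∀ g ∈ S, ∫ x, g x ∂μ = ∫ x, g x ∂ν) {g : E →ᵇ 𝕜}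
    (hg : g ∈ Submodule.span 𝕜 S) : ∫ x, g x ∂μ = ∫ x, g x ∂ν := by
  induction hg using Submodule.span_induction with
  | mem g hg => exact h g hg
  | zero => simp
  | add f g _ _ hf hg =>
    simp only [BoundedContinuousFunction.coe_add, Pi.add_apply]
    rw [integral_add (f.integrable μ) (g.integrable μ), integral_add (f.integrable ν)
      (g.integrable ν), hf, hg]
  | smul c f _ hf => simp only [BoundedContinuousFunction.coe_smul, integral_smul, hf]

namespace Torus

variable {d : ℕ}

noncomputable def char (a : Fin d → ℤ) : (Fin d → Circle) →ᵇ ℂ :=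
  .mkOfCompact ⟨fun x => ((∏ j, x j ^ a j : Circle) : ℂ), by fun_prop⟩

theorem char_apply (a : Fin d → ℤ) (x : Fin d → Circle) :
    char a x = ((∏ j, x j ^ a j : Circle) : ℂ) := rfl

theorem char_eq_one_iff {a : Fin d → ℤ} {x : Fin d → Circle} :
    char a x = 1 ↔ ∏ j, x j ^ a j = 1 := by
  rw [char_apply, Circle.coe_eq_one]

theorem char_mul (a : Fin d → ℤ) (x y : Fin d → Circle) :
    char a (x * y) = char a x * char a y := by
  simp only [char_apply, Pi.mul_apply, mul_zpow, Finset.prod_mul_distrib, Circle.coe_mul]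

theorem char_add (a b : Fin d → ℤ) : char (a + b) = char a * char b := by
  ext x
  simp only [BoundedContinuousFunction.coe_mul, Pi.mul_apply, char_apply, Pi.add_apply, zpow_add,
    Finset.prod_mul_distrib, Circle.coe_mul]

theorem char_zero : char (0 : Fin d → ℤ) = 1 := by
  ext x
  simp [char_apply]

theorem star_char (a : Fin d → ℤ) : star (char a) = char (-a) := by
  ext x
  simp only [BoundedContinuousFunction.star_apply, char_apply, Pi.neg_apply, zpow_neg,
    RCLike.star_def, ← Circle.coe_inv_eq_conj, Finset.prod_inv_distrib, Circle.coe_inv]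

variable (d) in
noncomputable def charAlg : StarSubalgebra ℂ ((Fin d → Circle) →ᵇ ℂ) where
  toSubalgebra := (Submodule.span ℂ (range char)).toSubalgebra
    (Submodule.subset_span ⟨0, char_zero⟩)
    (fun _ _ hf hg => by
      have hfg := Submodule.mul_mem_mul hf hg
      rw [Submodule.span_mul_span] at hfg
      refine Submodule.span_mono ?_ hfg
      rintro _ ⟨_, ⟨a, rfl⟩, _, ⟨b, rfl⟩, rfl⟩
      exact ⟨a + b, char_add a b⟩)
  star_mem' {f} hf := by
    induction hf using Submodule.span_induction with
    | mem f hf =>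
      obtain ⟨a, rfl⟩ := hf
      exact Submodule.subset_span ⟨-a, (star_char a).symm⟩
    | zero => simp
    | add f g _ _ hf hg => simpa using Submodule.add_mem _ hf hg
    | smul c f _ hf => simpa using Submodule.smul_mem _ (star c) hf

theorem charAlg_separatesPoints :
    ((charAlg d).map (BoundedContinuousFunction.toContinuousMapStarₐ ℂ)).SeparatesPoints := by
  intro x y hxy
  obtain ⟨j, hj⟩ := Function.ne_iff.mp hxy
  refine ⟨_, ⟨_, ⟨char (Pi.single j 1), Submodule.subset_span ⟨_, rfl⟩, rfl⟩, rfl⟩, ?_⟩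
  have hcoord (w : Fin d → Circle) : char (Pi.single j 1) w = w j := by
    rw [char_apply, Finset.prod_eq_single j (fun i _ hi => by simp [Pi.single_eq_of_ne hi])
      (by simp)]
    simp
  simpa [hcoord, Circle.coe_inj] using hj

theorem mem_topologicalClosure_zpowers_of_relations (Γ z : Fin d → Circle)
    (h : ∀ a : Fin d → ℤ, ∏ j, Γ j ^ a j = 1 → ∏ j, z j ^ a j = 1) :
    z ∈ (Subgroup.zpowers Γ).topologicalClosure := by
  set H := (Subgroup.zpowers Γ).topologicalClosure
  let : MeasurableSpace (Fin d → Circle) := borel _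
  have : BorelSpace (Fin d → Circle) := ⟨rfl⟩
  have : CompactSpace H :=
    isCompact_iff_compactSpace.mp (Subgroup.zpowers Γ).isClosed_topologicalClosure.isCompact
  refine H.mem_of_map_mul_left_haar_eq <|
    ext_of_forall_mem_subalgebra_integral_eq_of_polish charAlg_separatesPoints fun g hg => ?_
  refine integral_eq_of_mem_span ?_ hg
  rintro _ ⟨a, rfl⟩
  rw [integral_map (by fun_prop) (by fun_prop), integral_map (by fun_prop) (by fun_prop)]
  exact H.integral_mul_left_eq_of_apply_eq_one Measure.haar (char_mul a)
    (Subgroup.le_topologicalClosure _ (Subgroup.mem_zpowers Γ))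
    (fun hΓ => char_eq_one_iff.mpr (h a (char_eq_one_iff.mp hΓ)))

end Torus

/-- If `z ∈ 𝕋^d` satisfies every multiplicative relation of `Γ ∈ 𝕋^d`, then every open set
containing `z` is visited by the orbit `(Γ^n)` infinitely often. -/
theorem orbit_visits_nbhd_infinitely_often (d : ℕ) (Γ z : Fin d → Circle)
    (h : ∀ a : Fin d → ℤ, (∏ j, Γ j ^ a j) = 1 → (∏ j, z j ^ a j) = 1)
    (O : Set (Fin d → Circle)) (hO : IsOpen O) (hz : z ∈ O) :
    {n : ℕ | Γ ^ n ∈ O}.Infinite := by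
  have hcluster : MapClusterPt z Filter.atTop (Γ ^ · : ℕ → Fin d → Circle) :=
    mapClusterPt_atTop_pow_iff_mem_topologicalClosure_zpowers.mpr
      (Torus.mem_topologicalClosure_zpowers_of_relations Γ z h)
  exact Nat.frequently_atTop_iff_infinite.mp
    (mapClusterPt_iff_frequently.mp hcluster O (hO.mem_nhds hz))
end

section
/- For Γ ∈ 𝕋^d, the topological closure of the orbit {Γ^n : n ∈ ℕ} in 𝕋^d equals the set {z ∈ 𝕋^d : G(Γ) ⊆ G(z)}. -/
/-!
Since `𝕋^d` is a compact group, the closure `S` of `{Γ^n : n ∈ ℕ}` is also the closure of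
`{Γ^n : n ∈ ℤ}`, a closed subgroup, on which every relation of `Γ` persists by continuity.
Conversely, let `z ∉ S` and let `μ` be a Haar measure on `S`. Pushed into the torus, `μ` and its
translate by `z` differ, since only the first one charges `S`. Yet if every character `χ` of the
torus that is trivial on `S` were trivial at `z`, the two would have the same integral against
every `χ`: either `χ z = 1`, or `χ` is nontrivial on `S` and, by invariance of `μ`, integrates
to `0` against both. By Stone–Weierstrass the torus characters span a dense star subalgebra, so
their integrals determine a finite measure: a contradiction.
-/

open MeasureTheory BoundedContinuousFunction

namespace PontryaginDual

variable {G : Type*} [Monoid G] [TopologicalSpace G]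

theorem mul_apply (χ ψ : PontryaginDual G) (x : G) : (χ * ψ) x = χ x * ψ x := rfl

theorem inv_apply (χ : PontryaginDual G) (x : G) : χ⁻¹ x = (χ x)⁻¹ := rfl

noncomputable def toBoundedContinuousFunction : PontryaginDual G →* (G →ᵇ ℂ) where
  toFun χ := mkOfBound ⟨fun x => (χ x : ℂ), by fun_prop⟩ 2 fun x y => by
    show dist (χ x : ℂ) (χ y) ≤ 2
    linarith [dist_le_norm_add_norm (χ x : ℂ) (χ y), Circle.norm_coe (χ x), Circle.norm_coe (χ y)]
  map_one' := by ext; simp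
  map_mul' χ ψ := by ext; simp [mul_apply]

@[simp]
theorem toBoundedContinuousFunction_apply (χ : PontryaginDual G) (x : G) :
    toBoundedContinuousFunction χ x = χ x :=
  rfl

theorem star_toBoundedContinuousFunction (χ : PontryaginDual G) :
    star (toBoundedContinuousFunction χ) = toBoundedContinuousFunction χ⁻¹ := by
  ext x
  simp only [star_apply, toBoundedContinuousFunction_apply, inv_apply, Circle.coe_inv_eq_conj]
  rfl

theorem mem_span_of_mem_starAlgebra_adjoin {X : Subgroup (PontryaginDual G)} {f : G →ᵇ ℂ}
    (hf : f ∈ StarAlgebra.adjoin ℂ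
      (X.toSubmonoid.map toBoundedContinuousFunction : Set (G →ᵇ ℂ))) :
    f ∈ Submodule.span ℂ (X.toSubmonoid.map toBoundedContinuousFunction : Set (G →ᵇ ℂ)) := by
  have hstar : star (X.toSubmonoid.map toBoundedContinuousFunction : Set (G →ᵇ ℂ)) ⊆
      X.toSubmonoid.map toBoundedContinuousFunction := by
    rintro f ⟨χ, hχ, hχf⟩
    refine ⟨χ⁻¹, X.inv_mem hχ, ?_⟩
    rw [← star_toBoundedContinuousFunction, hχf, star_star]
  rwa [← StarSubalgebra.mem_toSubalgebra, ← Subalgebra.mem_toSubmodule,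
    StarAlgebra.adjoin_eq_span, Set.union_eq_left.mpr hstar, Submonoid.closure_eq] at hf

end PontryaginDual

open PontryaginDual

theorem MeasureTheory.Measure.ext_of_forall_mem_subgroup_integral_eq_of_polish
    {G : Type*} [Monoid G] [TopologicalSpace G] [PolishSpace G] [MeasurableSpace G]
    [BorelSpace G] {X : Subgroup (PontryaginDual G)} (hX : ∀ x y, x ≠ y → ∃ χ ∈ X, χ x ≠ χ y)
    {P P' : Measure G} [IsFiniteMeasure P] [IsFiniteMeasure P']
    (h : ∀ χ ∈ X, ∫ x, (χ x : ℂ) ∂P = ∫ x, (χ x : ℂ) ∂P') : P = P' := by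
  have hspan : ∀ f ∈ Submodule.span ℂ
      (X.toSubmonoid.map toBoundedContinuousFunction : Set (G →ᵇ ℂ)),
      ∫ x, f x ∂P = ∫ x, f x ∂P' := by
    intro f hf
    induction hf using Submodule.span_induction with
    | mem f hf =>
      obtain ⟨χ, hχ, rfl⟩ := hf
      exact h χ hχ
    | zero => simp
    | add f g _ _ hf hg =>
      simp only [BoundedContinuousFunction.coe_add, Pi.add_apply]
      rw [integral_add (f.integrable P) (g.integrable P),
        integral_add (f.integrable P') (g.integrable P'), hf, hg]
    | smul c f _ hf =>
      simp only [BoundedContinuousFunction.coe_smul, smul_eq_mul, integral_const_mul, hf]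
  refine ext_of_forall_mem_subalgebra_integral_eq_of_polish (A := StarAlgebra.adjoin ℂ
    (X.toSubmonoid.map toBoundedContinuousFunction : Set (G →ᵇ ℂ))) ?_
    fun f hf => hspan f (mem_span_of_mem_starAlgebra_adjoin hf)
  intro x y hxy
  obtain ⟨χ, hχ, hχxy⟩ := hX x y hxy
  refine ⟨_, ⟨_, ⟨toBoundedContinuousFunction χ,
    StarAlgebra.subset_adjoin ℂ _ ⟨χ, hχ, rfl⟩, rfl⟩, rfl⟩, ?_⟩
  simpa [Circle.coe_inj] using hχxy

theorem MeasureTheory.integral_eq_zero_of_mul_left_eq_mul {H : Type*} [Group H]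
    [MeasurableSpace H] [MeasurableMul H] {μ : Measure H} [μ.IsMulLeftInvariant] {f : H → ℂ}
    {g : H} {c : ℂ} (hc : c ≠ 1) (hf : ∀ x, f (g * x) = c * f x) : ∫ x, f x ∂μ = 0 := by
  have hinv := integral_mul_left_eq_self (μ := μ) f g
  simp only [hf, integral_const_mul] at hinv
  have : (c - 1) * ∫ x, f x ∂μ = 0 := by rw [sub_mul, hinv, one_mul, sub_self]
  exact (mul_eq_zero.mp this).resolve_left (sub_ne_zero.mpr hc)

namespace PontryaginDual

variable {G : Type*} [Group G] [TopologicalSpace G] [IsTopologicalGroup G] [CompactSpace G]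
  [PolishSpace G] {X : Subgroup (PontryaginDual G)}

theorem exists_mem_forall_eq_one_ne_one_of_notMem (hX : ∀ x y, x ≠ y → ∃ χ ∈ X, χ x ≠ χ y)
    {S : Subgroup G} (hS : IsClosed (S : Set G)) {z : G} (hz : z ∉ S) :
    ∃ χ ∈ X, (∀ s ∈ S, χ s = 1) ∧ χ z ≠ 1 := by
  borelize G
  by_contra! hXS
  have : CompactSpace S := isCompact_iff_compactSpace.mp hS.isCompact
  let μ : Measure S := Measure.haar
  have hμ : μ.map Subtype.val = μ.map (fun s : S => z * s) := by
    refine Measure.ext_of_forall_mem_subgroup_integral_eq_of_polish hX fun χ hχ => ?_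
    rw [integral_map (by fun_prop) (by fun_prop), integral_map (by fun_prop) (by fun_prop)]
    have hmul (x : S) : (χ (z * x) : ℂ) = χ z * χ x := by rw [_root_.map_mul, Circle.coe_mul]
    rw [integral_congr_ae (Filter.Eventually.of_forall hmul), integral_const_mul]
    by_cases hχS : ∀ s ∈ S, χ s = 1
    · simp [hXS χ hχ hχS]
    · push Not at hχS
      obtain ⟨s, hsS, hχs⟩ := hχS
      rw [integral_eq_zero_of_mul_left_eq_mul (g := (⟨s, hsS⟩ : S)) (c := (χ s : ℂ))
        (Circle.coe_eq_one.not.mpr hχs) (fun x => by simp), mul_zero]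
  have hval : μ.map Subtype.val S = μ Set.univ := by
    rw [Measure.map_apply (by fun_prop) hS.measurableSet]
    congr 1
    ext s
    simp
  have htranslate : μ.map (fun s : S => z * s) S = 0 := by
    rw [Measure.map_apply (by fun_prop) hS.measurableSet]
    convert measure_empty (μ := μ)
    ext s
    simpa using fun h => hz (by simpa using S.mul_mem h (S.inv_mem s.2))
  exact (Measure.measure_univ_pos.mpr (NeZero.ne μ)).ne' (hval ▸ hμ ▸ htranslate)

theorem mem_topologicalClosure_zpowers_iff (hX : ∀ x y, x ≠ y → ∃ χ ∈ X, χ x ≠ χ y)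
    {g z : G} : z ∈ (Subgroup.zpowers g).topologicalClosure ↔ ∀ χ ∈ X, χ g = 1 → χ z = 1 := by
  constructor
  · intro hz χ _ hχg
    have hker : (Subgroup.zpowers g).topologicalClosure ≤ (χ : G →* Circle).ker :=
      Subgroup.topologicalClosure_minimal _ (Subgroup.zpowers_le.mpr hχg)
        (isClosed_eq χ.continuous continuous_const)
    exact hker hz
  · intro hz
    by_contra hzS
    obtain ⟨χ, hχ, hχS, hχz⟩ := exists_mem_forall_eq_one_ne_one_of_notMem hX
      (Subgroup.isClosed_topologicalClosure _) hzS
    exact hχz (hz χ hχ (hχS g (Subgroup.le_topologicalClosure _ (Subgroup.mem_zpowers g))))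

end PontryaginDual

section Torus

variable {ι : Type*} [Fintype ι]

noncomputable def torusChar (a : ι → ℤ) : PontryaginDual (ι → Circle) where
  toFun w := ∏ j, w j ^ a j
  map_one' := by simp
  map_mul' w w' := by simp [mul_zpow, Finset.prod_mul_distrib]
  continuous_toFun := by fun_prop

@[simp]
theorem torusChar_apply (a : ι → ℤ) (w : ι → Circle) : torusChar a w = ∏ j, w j ^ a j := rfl

theorem torusChar_single [DecidableEq ι] (j : ι) (w : ι → Circle) :
    torusChar (Pi.single j 1) w = w j := by
  simp [Pi.single_apply]

variable (ι) in
noncomputable def torusCharacters : Subgroup (PontryaginDual (ι → Circle)) where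
  carrier := Set.range torusChar
  mul_mem' := by
    rintro _ _ ⟨a, rfl⟩ ⟨b, rfl⟩
    exact ⟨a + b, by ext w; simp [zpow_add, Finset.prod_mul_distrib, PontryaginDual.mul_apply]⟩
  one_mem' := ⟨0, by ext w; simp⟩
  inv_mem' := by
    rintro _ ⟨a, rfl⟩
    exact ⟨-a, by ext w; simp [PontryaginDual.inv_apply]⟩

theorem mem_torusCharacters {χ : PontryaginDual (ι → Circle)} :
    χ ∈ torusCharacters ι ↔ ∃ a, torusChar a = χ :=
  Iff.rfl

theorem torusCharacters_separatesPoints (x y : ι → Circle) (hxy : x ≠ y) :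
    ∃ χ ∈ torusCharacters ι, χ x ≠ χ y := by
  classical
  obtain ⟨j, hj⟩ := Function.ne_iff.mp hxy
  exact ⟨_, ⟨Pi.single j 1, rfl⟩, by simpa only [torusChar_single] using hj⟩

end Torus

/-- The closure of the orbit `{Γ^n : n ∈ ℕ}` in `𝕋^d` is exactly the set of points
satisfying all multiplicative relations of `Γ`. -/
theorem orbit_closure_eq_mult_relations (d : ℕ) (Γ : Fin d → Circle) :
    closure {w : Fin d → Circle | ∃ n : ℕ, Γ ^ n = w} =
      {z : Fin d → Circle | ∀ a : Fin d → ℤ, (∏ j, Γ j ^ a j) = 1 → (∏ j, z j ^ a j) = 1} := by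
  change closure (Set.range (Γ ^ · : ℕ → _)) = _
  rw [← closure_range_zpow_eq_pow, ← Subgroup.coe_zpowers, ← Subgroup.topologicalClosure_coe]
  ext z
  simp only [SetLike.mem_coe, mem_topologicalClosure_zpowers_iff torusCharacters_separatesPoints,
    mem_torusCharacters, forall_exists_index, forall_apply_eq_imp_iff, torusChar_apply,
    Set.mem_ofPred_eq]
end

section
/- If α_0,…,α_{L−1} are toric words, then their product word α, defined by α(n) = (α_0(n),…,α_{L−1}(n)), is also toric. -/
/-- `w` occurs in the infinite word `α` at position `n`. -/
def Occurs {A : Type*} (w : List A) (α : ℕ → A) (n : ℕ) : Prop :=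
  ∀ i : Fin w.length, α (n + i) = w.get i

/-- `α` is the coding of the orbit of `Γ` in the torus with respect to the
pairwise disjoint target sets `S a`, each with finitely many connected components. -/
def Generates {A : Type*} {d : ℕ} (Γ : Fin d → Circle)
    (S : A → Set (Fin d → Circle)) (α : ℕ → A) : Prop :=
  Pairwise (fun a b => Disjoint (S a) (S b)) ∧
  (∀ a, Finite (ConnectedComponents ↥(S a))) ∧
  ∀ (n : ℕ) (a : A), α n = a ↔ Γ ^ n ∈ S a

/-- Toric word. -/
def IsToricWord {A : Type*} (α : ℕ → A) : Prop :=
  ∃ d : ℕ, 0 < d ∧ ∃ (Γ : Fin d → Circle) (S : A → Set (Fin d → Circle)),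
    Generates Γ S α

/-- Toric word with open target sets (class 𝒯_O). -/
def IsOpenToricWord {A : Type*} (α : ℕ → A) : Prop :=
  ∃ d : ℕ, 0 < d ∧ ∃ (Γ : Fin d → Circle) (S : A → Set (Fin d → Circle)),
    Generates Γ S α ∧ ∀ a, IsOpen (S a)

/-- Semialgebraic subset of `ι → ℝ`: a finite union of finite intersections of
sets defined by (strict or non-strict) polynomial inequalities. -/
def IsSemialgebraicSet {ι : Type*} (X : Set (ι → ℝ)) : Prop :=
  ∃ (k l : ℕ) (p : Fin k → Fin l → MvPolynomial ι ℝ) (strict : Fin k → Fin l → Bool),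
    X = ⋃ i, ⋂ j, {x | if strict i j then 0 < MvPolynomial.eval x (p i j)
                       else 0 ≤ MvPolynomial.eval x (p i j)}

/-- Real-imaginary coordinates of a point of the torus `𝕋^d`, as a point of `ℝ^{2d}`. -/
def circleEmbed {d : ℕ} (z : Fin d → Circle) : Fin d × Fin 2 → ℝ :=
  fun p => if p.2 = 0 then ((z p.1 : ℂ)).re else ((z p.1 : ℂ)).im

/-- A subset of `𝕋^d` is semialgebraic if the corresponding subset of `ℝ^{2d}` is. -/
def IsSemialgebraicCircleSet {d : ℕ} (S : Set (Fin d → Circle)) : Prop :=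
  IsSemialgebraicSet (circleEmbed '' S)

/-- Toric word with semialgebraic target sets (class 𝒯_SA). -/
def IsSAToricWord {A : Type*} (α : ℕ → A) : Prop :=
  ∃ d : ℕ, 0 < d ∧ ∃ (Γ : Fin d → Circle) (S : A → Set (Fin d → Circle)),
    Generates Γ S α ∧ ∀ a, IsSemialgebraicCircleSet (S a)

/-- Almost-periodic word: for every finite word `w` there is a bound `R` such that
either `w` does not occur in `α[R,∞)`, or `w` occurs in every factor of `α` of length `R`. -/
def AlmostPeriodic {A : Type*} (α : ℕ → A) : Prop :=
  ∀ w : List A, ∃ R : ℕ,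
    (∀ n, R ≤ n → ¬ Occurs w α n) ∨
    (∀ n, ∃ m, n ≤ m ∧ m + w.length ≤ n + R ∧ Occurs w α m)

/-- Strongly almost-periodic (uniformly recurrent) word: every finite word either never
occurs, or occurs in every sufficiently long factor. -/
def StronglyAlmostPeriodic {A : Type*} (α : ℕ → A) : Prop :=
  ∀ w : List A,
    (∀ n, ¬ Occurs w α n) ∨
    ∃ R : ℕ, ∀ n, ∃ m, n ≤ m ∧ m + w.length ≤ n + R ∧ Occurs w α m

private lemma ccFinite_of_inj {X Y : Type*} [TopologicalSpace X] [TopologicalSpace Y]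
    [TotallyDisconnectedSpace Y] [Finite Y] {f : X → Y} (hf : Continuous f)
    (hinj : ∀ x y : X, f x = f y → connectedComponent x = connectedComponent y) :
    Finite (ConnectedComponents X) := by
  refine Finite.of_injective hf.connectedComponentsLift ?_
  intro u v huv
  obtain ⟨x, rfl⟩ := ConnectedComponents.surjective_coe u
  obtain ⟨y, rfl⟩ := ConnectedComponents.surjective_coe v
  simp only [Continuous.connectedComponentsLift_apply_coe] at huv
  exact ConnectedComponents.coe_eq_coe.mpr (hinj x y huv)

/-- The product of toric words is toric. -/
theorem product_of_toric_is_toric (L : ℕ) (A : Fin L → Type) (αs : ∀ i, ℕ → A i)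
    (h : ∀ i, IsToricWord (αs i)) :
    IsToricWord (fun n => (fun i => αs i n : ∀ i, A i)) := by
  classical
  choose D hD Γs Ss hGen using h
  haveI : Nonempty (Unit ⊕ (Σ i : Fin L, Fin (D i))) := ⟨Sum.inl ()⟩
  set ι := Unit ⊕ (Σ i : Fin L, Fin (D i)) with hι
  refine ⟨Fintype.card ι, Fintype.card_pos, ?_⟩
  set E : Fin (Fintype.card ι) ≃ ι := (Fintype.equivFin ι).symm with hE
  set Γ : Fin (Fintype.card ι) → Circle :=
    fun k => Sum.elim (fun _ => 1) (fun p => Γs p.1 p.2) (E k) with hΓ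
  set S : (∀ i, A i) → Set (Fin (Fintype.card ι) → Circle) :=
    fun a => {z | ∀ i, (fun j => z (E.symm (Sum.inr ⟨i, j⟩))) ∈ Ss i (a i)} with hS
  have proj_pow : ∀ (n : ℕ) (i : Fin L),
      (fun j => (Γ ^ n) (E.symm (Sum.inr ⟨i, j⟩))) = Γs i ^ n := by
    intro n i
    funext j
    simp [hΓ, Pi.pow_apply, Equiv.apply_symm_apply]
  refine ⟨Γ, S, ?_, ?_, ?_⟩
  · -- pairwise disjoint
    intro a b hab
    rw [Set.disjoint_left]
    intro z hza hzb
    refine hab (funext fun i => ?_)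
    by_contra hne
    exact Set.disjoint_left.mp ((hGen i).1 hne) (hza i) (hzb i)
  · -- finite connected components
    intro a
    haveI : ∀ i, Finite (ConnectedComponents ↥(Ss i (a i))) := fun i => (hGen i).2.1 (a i)
    set px : ↥(S a) → ∀ i, ↥(Ss i (a i)) :=
      fun z i => ⟨fun j => z.1 (E.symm (Sum.inr ⟨i, j⟩)), z.2 i⟩ with hpx
    have h1 : Continuous px := by
      refine continuous_pi fun i => Continuous.subtype_mk (continuous_pi fun j => ?_) _
      exact (continuous_apply (E.symm (Sum.inr ⟨i, j⟩))).comp continuous_subtype_val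
    have hgc : Continuous fun z : ↥(S a) =>
        (fun i => (ConnectedComponents.mk (px z i)) :
          ∀ i, ConnectedComponents ↥(Ss i (a i))) :=
      continuous_pi fun i =>
        (ConnectedComponents.continuous_coe (α := ↥(Ss i (a i)))).comp
          ((continuous_apply i).comp h1)
    refine ccFinite_of_inj hgc ?_
    intro x y hxy
    have hmem : ∀ i, px x i ∈ connectedComponent (px y i) := by
      intro i
      exact ConnectedComponents.coe_eq_coe'.mp (congrFun hxy i)
    -- the gluing map
    set M : Circle × (∀ i, ↥(Ss i (a i))) → ↥(S a) := fun cw =>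
      ⟨fun k => Sum.elim (fun _ => cw.1) (fun p => (cw.2 p.1).1 p.2) (E k), by
        intro i
        have : (fun j => Sum.elim (fun _ => cw.1) (fun p => (cw.2 p.1).1 p.2)
            (E (E.symm (Sum.inr ⟨i, j⟩)))) = fun j => (cw.2 i).1 j := by
          funext j
          rw [Equiv.apply_symm_apply]
          rfl
        simp only [this]
        exact (cw.2 i).2⟩ with hM
    have hMc : Continuous M := by
      refine Continuous.subtype_mk (continuous_pi fun k => ?_) _
      rcases hk : E k with u | p <;> simp only [hk, Sum.elim_inl, Sum.elim_inr]
      · exact continuous_fst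
      · exact (continuous_apply p.2).comp
          (continuous_subtype_val.comp ((continuous_apply p.1).comp continuous_snd))
    set U : Set (Circle × (∀ i, ↥(Ss i (a i)))) :=
      (Set.univ : Set Circle) ×ˢ Set.univ.pi fun i => connectedComponent (px y i) with hU
    haveI : PreconnectedSpace Circle := by
      constructor
      have huniv : (Set.univ : Set Circle) = Set.range Circle.exp :=
        (Set.range_eq_univ.mpr fun (z : Circle) =>
          ⟨Complex.arg (z : ℂ), Circle.exp_arg z⟩).symm
      rw [huniv, ← Set.image_univ]
      exact isPreconnected_univ.image _ Circle.exp.continuous.continuousOn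
    have hUconn : IsPreconnected U :=
      IsPreconnected.prod (isPreconnected_univ (α := Circle))
        (isPreconnected_univ_pi fun i => isPreconnected_connectedComponent)
    have hsconn : IsPreconnected (M '' U) := hUconn.image M hMc.continuousOn
    have hrec : ∀ z : ↥(S a), M (z.1 (E.symm (Sum.inl ())), px z) = z := by
      intro z
      apply Subtype.ext
      funext k
      show Sum.elim _ _ (E k) = z.1 k
      conv_rhs => rw [← E.symm_apply_apply k]
      cases hk : E k with
      | inl u => rfl
      | inr p => rfl
    have hxmem : x ∈ M '' U := by
      refine ⟨(x.1 (E.symm (Sum.inl ())), px x), ⟨Set.mem_univ _, fun i _ => hmem i⟩, hrec x⟩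
    have hymem : y ∈ M '' U := by
      refine ⟨(y.1 (E.symm (Sum.inl ())), px y),
        ⟨Set.mem_univ _, fun i _ => mem_connectedComponent⟩, hrec y⟩
    have hsub : M '' U ⊆ connectedComponent x :=
      hsconn.subset_connectedComponent hxmem
    exact connectedComponent_eq (hsub hymem)
  · -- coding condition
    intro n a
    have : ((fun m => (fun i => αs i m : ∀ i, A i)) n = a) ↔ ∀ i, αs i n = a i := by
      constructor
      · intro hh i; exact congrFun hh i
      · intro hh; funext i; exact hh i
    rw [this]
    have : (Γ ^ n ∈ S a) ↔ ∀ i, Γs i ^ n ∈ Ss i (a i) := by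
      constructor
      · intro hz i
        have := hz i
        rwa [proj_pow n i] at this
      · intro hz i
        rw [proj_pow n i]
        exact hz i
    rw [this]
    exact forall_congr' fun i => (hGen i).2.2 n (a i)
end

section
/- If α is a toric word and τ is a k-uniform morphism (|τ(a)| = k for every letter a), then the word β = τ(α) is toric. Moreover, if α is generated with open target sets, so is β. -/
namespace ToricAux

open Real Set Complex


/-! ### Interval endpoints -/

noncomputable def lo (m : ℕ) : ℝ := π / 2 ^ (m + 2)
noncomputable def hi (m : ℕ) : ℝ := 3 * π / 2 ^ (m + 3)

lemma lo_pos (m : ℕ) : 0 < lo m := by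
  have := pi_pos; unfold lo; positivity

lemma lo_lt_hi (m : ℕ) : lo m < hi m := by
  unfold lo hi
  rw [div_lt_div_iff₀ (by positivity) (by positivity)]
  have := pi_pos
  ring_nf
  nlinarith [pow_pos (show (0:ℝ) < 2 by norm_num) m]

lemma hi_le_pi (m : ℕ) : hi m ≤ π := by
  unfold hi
  rw [div_le_iff₀ (by positivity)]
  have h1 : (8 : ℝ) ≤ 2 ^ (m + 3) := by
    calc (8:ℝ) = 2 ^ 3 := by norm_num
    _ ≤ 2 ^ (m+3) := by
      apply pow_le_pow_right₀ (by norm_num); omega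
  nlinarith [pi_pos]

lemma hi_lt_lo (m m' : ℕ) (h : m < m') : hi m' < lo m := by
  unfold lo hi
  rw [div_lt_div_iff₀ (by positivity) (by positivity)]
  have h2 : (2:ℝ) ^ (m + 2) * 4 ≤ 2 ^ (m' + 3) := by
    calc (2:ℝ) ^ (m+2) * 4 = 2 ^ (m + 4) := by ring
    _ ≤ 2 ^ (m' + 3) := by apply pow_le_pow_right₀ (by norm_num); omega
  nlinarith [pi_pos, pow_pos (show (0:ℝ) < 2 by norm_num) (m+2)]

noncomputable def mid (m : ℕ) : ℝ := (lo m + hi m) / 2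

lemma mid_mem (m : ℕ) : mid m ∈ Ioo (lo m) (hi m) := by
  constructor <;> · unfold mid; nlinarith [lo_lt_hi m]


/-! ### Subsets of the circle -/

def Half₁ : Set Circle := {u | 0 < (u : ℂ).re}
def Half₂ : Set Circle := {u | (u : ℂ).re < 0}
def ArcC (c e : ℝ) : Set Circle := {v | 0 < (v : ℂ).im ∧ (v : ℂ).arg ∈ Ioo c e}

lemma isOpen_Half₁ : IsOpen Half₁ :=
  isOpen_induced_iff.2 ⟨{w : ℂ | 0 < w.re}, (isOpen_lt continuous_const Complex.continuous_re), rfl⟩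

lemma isOpen_Half₂ : IsOpen Half₂ :=
  isOpen_induced_iff.2 ⟨{w : ℂ | w.re < 0}, (isOpen_lt Complex.continuous_re continuous_const), rfl⟩

lemma isOpen_ArcC (c e : ℝ) : IsOpen (ArcC c e) := by
  have h1 : IsOpen {w : ℂ | 0 < w.im ∧ w.arg ∈ Ioo c e} := by
    have : {w : ℂ | 0 < w.im ∧ w.arg ∈ Ioo c e}
        = {w : ℂ | 0 < w.im} ∩ Complex.arg ⁻¹' (Ioo c e) := rfl
    rw [this]
    apply ContinuousOn.isOpen_inter_preimage _ (isOpen_lt continuous_const Complex.continuous_im)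
      isOpen_Ioo
    intro w hw
    exact (Complex.continuousAt_arg (Complex.mem_slitPlane_iff.2 (Or.inr (ne_of_gt hw)))).continuousWithinAt
  exact isOpen_induced_iff.2 ⟨_, h1, rfl⟩

lemma re_coe (v : Circle) : (v : ℂ).re = Real.cos ((v:ℂ).arg) := by
  rw [Complex.cos_arg (Circle.coe_ne_zero v)]
  rw [Circle.norm_coe, div_one]

lemma im_coe (v : Circle) : (v : ℂ).im = Real.sin ((v:ℂ).arg) := by
  rw [Complex.sin_arg]; rw [Circle.norm_coe, div_one]

lemma exp_re (t : ℝ) : ((Circle.exp t : Circle) : ℂ).re = Real.cos t := by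
  rw [Circle.coe_exp]; exact Complex.exp_ofReal_mul_I_re t

lemma exp_im (t : ℝ) : ((Circle.exp t : Circle) : ℂ).im = Real.sin t := by
  rw [Circle.coe_exp]; exact Complex.exp_ofReal_mul_I_im t

lemma arcC_eq_image {c e : ℝ} (hc : 0 ≤ c) (he : e ≤ π) :
    ArcC c e = Circle.exp '' Ioo c e := by
  ext v
  constructor
  · rintro ⟨_, hv⟩
    exact ⟨(v:ℂ).arg, hv, Circle.exp_arg v⟩
  · rintro ⟨t, ht, rfl⟩
    have h1 : 0 < t := lt_of_le_of_lt hc ht.1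
    have h2 : t < π := lt_of_lt_of_le ht.2 he
    have harg : (Circle.exp t : ℂ).arg = t := Circle.arg_exp (by linarith [pi_pos]) h2.le
    exact ⟨by rw [exp_im]; exact Real.sin_pos_of_pos_of_lt_pi h1 h2, by rw [harg]; exact ht⟩

lemma isPreconnected_ArcC {c e : ℝ} (hc : 0 ≤ c) (he : e ≤ π) :
    IsPreconnected (ArcC c e) := by
  rw [arcC_eq_image hc he]
  exact (isPreconnected_Ioo).image _ (Circle.exp.continuous.continuousOn)

lemma half₁_eq_image : Half₁ = Circle.exp '' Ioo (-(π/2)) (π/2) := by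
  ext v
  constructor
  · intro hv
    refine ⟨(v:ℂ).arg, ?_, Circle.exp_arg v⟩
    have hre : 0 < Real.cos ((v:ℂ).arg) := by rw [← re_coe]; exact hv
    constructor
    · by_contra h
      push_neg at h
      have : Real.cos ((v:ℂ).arg) ≤ 0 := by
        have := Complex.neg_pi_lt_arg (v:ℂ)
        rw [← Real.cos_neg]
        apply Real.cos_nonpos_of_pi_div_two_le_of_le (by linarith) (by linarith)
      linarith
    · by_contra h
      push_neg at h
      have : Real.cos ((v:ℂ).arg) ≤ 0 :=
        Real.cos_nonpos_of_pi_div_two_le_of_le h (by linarith [Complex.arg_le_pi (v:ℂ)])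
      linarith
  · rintro ⟨t, ht, rfl⟩
    show 0 < ((Circle.exp t : Circle) : ℂ).re
    rw [exp_re]
    exact Real.cos_pos_of_mem_Ioo ⟨ht.1, ht.2⟩

lemma half₂_eq_image : Half₂ = Circle.exp '' Ioo (π/2) (3 * π / 2) := by
  ext v
  constructor
  · intro hv
    have hre : Real.cos ((v:ℂ).arg) < 0 := by rw [← re_coe]; exact hv
    rcases le_or_gt ((v:ℂ).arg) 0 with h | h
    · have harg : (v:ℂ).arg < -(π/2) := by
        by_contra hc
        push_neg at hc
        have : 0 ≤ Real.cos ((v:ℂ).arg) :=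
          Real.cos_nonneg_of_mem_Icc ⟨by linarith, by linarith [pi_pos]⟩
        linarith
      refine ⟨(v:ℂ).arg + 2 * π, ⟨?_, ?_⟩, ?_⟩
      · linarith [Complex.neg_pi_lt_arg (v:ℂ), pi_pos]
      · linarith
      · rw [Circle.exp_add_two_pi, Circle.exp_arg]
    · refine ⟨(v:ℂ).arg, ⟨?_, ?_⟩, Circle.exp_arg v⟩
      · by_contra hc
        push_neg at hc
        have : 0 ≤ Real.cos ((v:ℂ).arg) := Real.cos_nonneg_of_mem_Icc ⟨by linarith, hc⟩
        linarith
      · linarith [Complex.arg_le_pi (v:ℂ), pi_pos]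
  · rintro ⟨t, ht, rfl⟩
    show ((Circle.exp t : Circle) : ℂ).re < 0
    rw [exp_re]
    exact Real.cos_neg_of_pi_div_two_lt_of_lt ht.1 (by linarith [ht.2])

lemma isPreconnected_Half₁ : IsPreconnected Half₁ := by
  rw [half₁_eq_image]; exact (isPreconnected_Ioo).image _ (Circle.exp.continuous.continuousOn)

lemma isPreconnected_Half₂ : IsPreconnected Half₂ := by
  rw [half₂_eq_image]; exact (isPreconnected_Ioo).image _ (Circle.exp.continuous.continuousOn)

lemma one_mem_Half₁ : (1 : Circle) ∈ Half₁ := by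
  show 0 < ((1 : Circle) : ℂ).re
  simp

lemma one_not_mem_Half₂ : (1 : Circle) ∉ Half₂ := by
  show ¬ (((1 : Circle) : ℂ).re < 0)
  simp


lemma exp_pow (t : ℝ) (n : ℕ) : (Circle.exp t) ^ n = Circle.exp (n * t) := by
  induction n with
  | zero => simp [Circle.exp_zero]
  | succ n ih =>
    rw [pow_succ, ih, ← Circle.exp_add]
    push_cast
    ring_nf

/-- Key reduction: if `cos s > cos ε` with `0 < ε ≤ π`, then `s` is within `ε` of a
multiple of `2π`. -/
lemma close_to_mul_two_pi {s ε : ℝ} (hε : 0 < ε) (hεπ : ε ≤ π)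
    (h : Real.cos ε < Real.cos s) : ∃ m : ℤ, |s - 2 * π * m| < ε := by
  refine ⟨round (s / (2 * π)), ?_⟩
  set m : ℤ := round (s / (2 * π)) with hm
  have h2π : (0:ℝ) < 2 * π := by linarith [pi_pos]
  have hb : |s - 2 * π * m| ≤ π := by
    have h1 : s - 2 * π * m = 2 * π * (s / (2 * π) - m) := by
      field_simp
    rw [h1, abs_mul, abs_of_pos h2π]
    have h2 := abs_sub_round (s / (2 * π))
    nlinarith [abs_nonneg (s / (2 * π) - (m:ℝ))]
  have hcos : Real.cos (s - 2 * π * m) = Real.cos s := by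
    have h := Real.cos_periodic.sub_int_mul_eq (x := s) (n := m)
    rw [show s - 2 * π * (m:ℝ) = s - (m:ℝ) * (2 * π) by ring]
    exact h
  by_contra hc
  push_neg at hc
  have h2 : Real.cos (|s - 2 * π * m|) ≤ Real.cos ε :=
    Real.cos_le_cos_of_nonneg_of_le_pi hε.le hb hc
  rw [Real.cos_abs, hcos] at h2
  linarith

lemma int_eq_of_dist_lt {x y : ℤ} (h : |(x:ℝ) - y| < 1) : x = y := by
  have h' : |(x - y : ℤ)| < 1 := by
    exact_mod_cast (show |((x - y : ℤ) : ℝ)| < 1 by push_cast; exact h)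
  rw [abs_lt] at h'
  omega

/-- The arc of half-width `π/k` around the `r`-th `k`-th root of unity. -/
noncomputable def Zarc (k r : ℕ) : Set Circle :=
  {w | Real.cos (π / k) < (((Circle.exp (2 * π * r / k))⁻¹ * w : Circle) : ℂ).re}

lemma isOpen_Zarc (k r : ℕ) : IsOpen (Zarc k r) := by
  apply isOpen_lt continuous_const
  have h : Continuous fun w : Circle => ((Circle.exp (2 * π * r / k))⁻¹ * w : Circle) :=
    continuous_const.mul continuous_id
  exact Complex.continuous_re.comp (continuous_subtype_val.comp h)

lemma cos_pi_div_lt_one {k : ℕ} (hk : 0 < k) : Real.cos (π / k) < 1 := by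
  have h1 : 0 < π / k := by have := pi_pos; positivity
  have h2 : π / k ≤ π := by
    rw [div_le_iff₀ (by exact_mod_cast hk)]
    nlinarith [pi_pos, (show (1:ℝ) ≤ k by exact_mod_cast hk)]
  calc Real.cos (π / k) < Real.cos 0 :=
        Real.strictAntiOn_cos ⟨le_rfl, pi_pos.le⟩ ⟨h1.le, h2⟩ h1
  _ = 1 := Real.cos_zero

lemma pi_div_le_pi {k : ℕ} (hk : 0 < k) : π / k ≤ π := by
  rw [div_le_iff₀ (by exact_mod_cast hk)]
  nlinarith [pi_pos, (show (1:ℝ) ≤ k by exact_mod_cast hk)]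

/-- Membership of an exponential in `Zarc`. -/
lemma exp_mem_Zarc_iff {k r : ℕ} (hk : 0 < k) (hr : r < k) (x : ℤ) :
    Circle.exp (2 * π * x / k) ∈ Zarc k r ↔ x % (k:ℤ) = r := by
  have hkR : (0:ℝ) < k := by exact_mod_cast hk
  have hre : (((Circle.exp (2 * π * r / k))⁻¹ * Circle.exp (2 * π * x / k) : Circle) : ℂ).re
      = Real.cos (2 * π * (x - r) / k) := by
    rw [← Circle.exp_neg, ← Circle.exp_add, exp_re]
    congr 1
    field_simp
    ring
  constructor
  · intro h
    have h' : Real.cos (π / k) < Real.cos (2 * π * ((x:ℝ) - r) / k) := by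
      rw [← hre]; exact h
    obtain ⟨m, hm⟩ := close_to_mul_two_pi (by have := pi_pos; positivity) (pi_div_le_pi hk) h'
    have hfac : 2 * π * ((x:ℝ) - r) / k - 2 * π * m = (2 * π / k) * (((x:ℝ) - r) - k * m) := by
      field_simp
    rw [hfac, abs_mul, abs_of_pos (by have := pi_pos; positivity : (0:ℝ) < 2 * π / k)] at hm
    have h5 : |((x:ℝ) - r) - k * m| < 1 / 2 := by
      apply lt_of_mul_lt_mul_left (a := 2 * π / k) _ (by have := pi_pos; positivity)
      calc 2 * π / k * |((x:ℝ) - r) - k * m| < π / k := hm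
      _ = 2 * π / k * (1 / 2) := by ring
    have hxr : x - r = k * m :=
      int_eq_of_dist_lt (x := x - (r:ℤ)) (y := (k:ℤ) * m) (by push_cast; linarith [h5])
    have hx : x = (r:ℤ) + k * m := by linarith
    rw [hx, Int.add_mul_emod_self_left]
    exact Int.emod_eq_of_lt (by exact_mod_cast Nat.zero_le r) (by exact_mod_cast hr)
  · intro h
    have hdm := Int.mul_ediv_add_emod x (k:ℤ)
    have hq : x - (r:ℤ) = (k:ℤ) * (x / (k:ℤ)) := by
      rw [h] at hdm; linarith
    show Real.cos (π / k) < _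
    rw [hre]
    have he : 2 * π * ((x:ℝ) - r) / k = (x / (k:ℤ) : ℤ) * (2 * π) := by
      have : ((x:ℝ) - r) = (k:ℝ) * ((x / (k:ℤ) : ℤ) : ℝ) := by exact_mod_cast hq
      rw [this]
      field_simp
    rw [he, Real.cos_int_mul_two_pi]
    exact cos_pi_div_lt_one hk

lemma Zarc_disjoint {k r r' : ℕ} (hk : 0 < k) (hr : r < k) (hr' : r' < k) (hne : r ≠ r') :
    Zarc k r ∩ Zarc k r' = ∅ := by
  have hkR : (0:ℝ) < k := by exact_mod_cast hk
  ext w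
  simp only [mem_inter_iff, mem_empty_iff_false, iff_false, not_and]
  intro h1 h2
  have key : ∀ ρ : ℕ, w ∈ Zarc k ρ → ∃ m : ℤ, |(w:ℂ).arg - 2 * π * ρ / k - 2 * π * m| < π / k := by
    intro ρ hρ
    have hre : (((Circle.exp (2 * π * ρ / k))⁻¹ * w : Circle) : ℂ).re
        = Real.cos ((w:ℂ).arg - 2 * π * ρ / k) := by
      conv_lhs => rw [← Circle.exp_arg w]
      rw [← Circle.exp_neg, ← Circle.exp_add, exp_re]
      congr 1
      ring
    have h' : Real.cos (π / k) < Real.cos ((w:ℂ).arg - 2 * π * ρ / k) := by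
      rw [← hre]; exact hρ
    exact close_to_mul_two_pi (by have := pi_pos; positivity) (pi_div_le_pi hk) h'
  obtain ⟨m, hm⟩ := key r h1
  obtain ⟨m', hm'⟩ := key r' h2
  have hdiff : |(2 * π / k) * (((r':ℝ) - r) + k * (m' - m))| < 2 * π / k := by
    have heq : (2 * π / k) * (((r':ℝ) - r) + (k:ℝ) * ((m':ℝ) - m))
        = ((w:ℂ).arg - 2 * π * r / k - 2 * π * m) - ((w:ℂ).arg - 2 * π * r' / k - 2 * π * m') := by
      field_simp
      ring
    rw [heq]
    calc |((w:ℂ).arg - 2 * π * r / k - 2 * π * m) - ((w:ℂ).arg - 2 * π * r' / k - 2 * π * m')|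
        ≤ |(w:ℂ).arg - 2 * π * r / k - 2 * π * m| + |(w:ℂ).arg - 2 * π * r' / k - 2 * π * m'| :=
        abs_sub _ _
    _ < π / k + π / k := add_lt_add hm hm'
    _ = 2 * π / k := by ring
  have hpos : (0:ℝ) < 2 * π / k := by have := pi_pos; positivity
  rw [abs_mul, abs_of_pos hpos] at hdiff
  have h5 : |((r':ℝ) - r) + k * ((m':ℝ) - m)| < 1 := by
    apply lt_of_mul_lt_mul_left (a := 2 * π / k) _ hpos.le
    calc 2 * π / k * |((r':ℝ) - r) + k * ((m':ℝ) - m)| < 2 * π / k := hdiff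
    _ = 2 * π / k * 1 := by ring
  have hz : (r':ℤ) - r + k * (m' - m) = 0 := by
    have := int_eq_of_dist_lt (x := (r':ℤ) - r + k * (m' - m)) (y := 0)
      (by push_cast; simpa using h5)
    exact this
  have hdvd : (k:ℤ) ∣ (r':ℤ) - r := ⟨m - m', by linarith⟩
  have : (r':ℤ) - r = 0 := by
    apply Int.eq_zero_of_abs_lt_dvd hdvd
    rw [abs_lt]
    constructor <;> [exact_mod_cast (by omega : -(k:ℤ) < (r':ℤ) - r); exact_mod_cast (by omega : (r':ℤ) - (r:ℤ) < k)]
  omega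

def PSet (m : ℕ) : Set (Circle × Circle) := (Half₁ ×ˢ univ) ∪ (univ ×ˢ ArcC (lo m) (hi m))
def QSet (m : ℕ) : Set (Circle × Circle) := Half₂ ×ˢ ArcC (lo m) (hi m)

lemma isOpen_PSet (m : ℕ) : IsOpen (PSet m) :=
  ((isOpen_Half₁.prod isOpen_univ).union (isOpen_univ.prod (isOpen_ArcC _ _)))

lemma isOpen_QSet (m : ℕ) : IsOpen (QSet m) := isOpen_Half₂.prod (isOpen_ArcC _ _)

lemma one_one_mem_PSet (m : ℕ) : ((1 : Circle), (1 : Circle)) ∈ PSet m :=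
  Or.inl ⟨one_mem_Half₁, mem_univ _⟩

lemma one_one_not_mem_QSet (m : ℕ) : ((1 : Circle), (1 : Circle)) ∉ QSet m :=
  fun h => one_not_mem_Half₂ h.1

lemma ArcC_disjoint {m m' : ℕ} (h : m ≠ m') :
    ArcC (lo m) (hi m) ∩ ArcC (lo m') (hi m') = ∅ := by
  ext v
  simp only [mem_inter_iff, mem_empty_iff_false, iff_false, not_and]
  rintro ⟨-, h1⟩ ⟨-, h2⟩
  rcases lt_or_gt_of_ne h with hlt | hlt
  · linarith [hi_lt_lo m m' hlt, h1.1, h2.2]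
  · linarith [hi_lt_lo m' m hlt, h2.1, h1.2]

lemma PSet_inter_QSet {m m' : ℕ} (h : m ≠ m') : PSet m ∩ QSet m' = ∅ := by
  ext ⟨p, q⟩
  simp only [mem_inter_iff, mem_empty_iff_false, iff_false, not_and]
  rintro (⟨hp, -⟩ | ⟨-, hp⟩) ⟨hq1, hq2⟩
  · have hp' : 0 < (p : ℂ).re := hp
    have hq' : (p : ℂ).re < 0 := hq1
    linarith
  · have := ArcC_disjoint h
    exact absurd (mem_inter hp hq2) (by rw [this]; exact notMem_empty q)

lemma QSet_inter_QSet {m m' : ℕ} (h : m ≠ m') : QSet m ∩ QSet m' = ∅ := by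
  ext ⟨p, q⟩
  simp only [mem_inter_iff, mem_empty_iff_false, iff_false, not_and]
  rintro ⟨-, hq⟩ ⟨-, hq'⟩
  have := ArcC_disjoint h
  exact absurd (mem_inter hq hq') (by rw [this]; exact notMem_empty q)

lemma isPreconnected_univ_circle : IsPreconnected (univ : Set Circle) := by
  have h : (univ : Set Circle) = Circle.exp '' univ := by
    ext v
    simp only [mem_univ, true_iff, mem_image]
    exact ⟨(v:ℂ).arg, trivial, Circle.exp_arg v⟩
  rw [h]
  exact isPreconnected_univ.image _ (Circle.exp.continuous.continuousOn)

noncomputable def apt (m : ℕ) : Circle := Circle.exp (mid m)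

lemma apt_mem_ArcC (m : ℕ) : apt m ∈ ArcC (lo m) (hi m) := by
  rw [arcC_eq_image (lo_pos m).le (hi_le_pi m)]
  exact ⟨mid m, mid_mem m, rfl⟩

lemma negone_mem_Half₂ : Circle.exp π ∈ Half₂ := by
  show (↑(Circle.exp π) : ℂ).re < 0
  rw [exp_re, Real.cos_pi]
  norm_num

lemma isPreconnected_QSet (m : ℕ) : IsPreconnected (QSet m) :=
  isPreconnected_Half₂.prod (isPreconnected_ArcC (lo_pos m).le (hi_le_pi m))

lemma isPreconnected_PSet_union_QSet (m : ℕ) : IsPreconnected (PSet m ∪ QSet m) := by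
  have hP : IsPreconnected (PSet m) := by
    apply IsPreconnected.union ((1 : Circle), apt m)
    · exact ⟨one_mem_Half₁, mem_univ _⟩
    · exact ⟨mem_univ _, apt_mem_ArcC m⟩
    · exact isPreconnected_Half₁.prod isPreconnected_univ_circle
    · exact isPreconnected_univ_circle.prod (isPreconnected_ArcC (lo_pos m).le (hi_le_pi m))
  apply IsPreconnected.union (Circle.exp π, apt m)
  · exact Or.inr ⟨mem_univ _, apt_mem_ArcC m⟩
  · exact ⟨negone_mem_Half₂, apt_mem_ArcC m⟩
  · exact hP
  · exact isPreconnected_QSet m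

lemma QSet_nonempty (m : ℕ) : (QSet m).Nonempty :=
  ⟨(Circle.exp π, apt m), negone_mem_Half₂, apt_mem_ArcC m⟩


noncomputable def qpt (m : ℕ) : Circle × Circle := (Circle.exp π, apt m)

lemma qpt_mem (m : ℕ) : qpt m ∈ QSet m := ⟨negone_mem_Half₂, apt_mem_ArcC m⟩
/-! ### Indices -/

def em0 {d : ℕ} (i : Fin d) : Fin (d+3) := ⟨i.1, by omega⟩
def emd (d : ℕ) : Fin (d+3) := ⟨d, by omega⟩
def em1 (d : ℕ) : Fin (d+3) := ⟨d+1, by omega⟩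
def em2 (d : ℕ) : Fin (d+3) := ⟨d+2, by omega⟩

lemma em0_ne_em1 {d : ℕ} (i : Fin d) : em0 i ≠ em1 d := by
  intro h; have := congrArg Fin.val h; simp only [em0, em1] at this; omega
lemma em0_ne_em2 {d : ℕ} (i : Fin d) : em0 i ≠ em2 d := by
  intro h; have := congrArg Fin.val h; simp only [em0, em2] at this; omega
lemma emd_ne_em1 (d : ℕ) : emd d ≠ em1 d := by
  intro h; have := congrArg Fin.val h; simp only [emd, em1] at this; omega
lemma emd_ne_em2 (d : ℕ) : emd d ≠ em2 d := by
  intro h; have := congrArg Fin.val h; simp only [emd, em2] at this; omega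
lemma em2_ne_em1 (d : ℕ) : em2 d ≠ em1 d := by
  intro h; have := congrArg Fin.val h; simp only [em2, em1] at this; omega

/-! ### The new orbit point -/

noncomputable def Theta {d : ℕ} (Γ : Fin d → Circle) (k : ℕ) : Fin d → Circle :=
  fun i => Circle.exp ((Γ i : ℂ).arg / k)

lemma Theta_pow {d : ℕ} (Γ : Fin d → Circle) {k : ℕ} (hk : 0 < k) (i : Fin d) :
    Theta Γ k i ^ k = Γ i := by
  rw [Theta, exp_pow]
  have hkne : (k:ℝ) ≠ 0 := by positivity
  rw [mul_div_cancel₀ _ hkne]  -- k * (x / k)?  careful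
  exact Circle.exp_arg _

noncomputable def Delta {d : ℕ} (Γ : Fin d → Circle) (k : ℕ) : Fin (d+3) → Circle :=
  fun j => if h : (j : ℕ) < d then Theta Γ k ⟨j, h⟩
    else if (j : ℕ) = d then Circle.exp (2 * π / k) else 1

lemma Delta_em0 {d : ℕ} (Γ : Fin d → Circle) (k : ℕ) (i : Fin d) :
    Delta Γ k (em0 i) = Theta Γ k i := by
  have h : ((em0 i : Fin (d+3)) : ℕ) < d := i.2
  simp only [Delta, dif_pos h]
  congr 1
lemma Delta_emd {d : ℕ} (Γ : Fin d → Circle) (k : ℕ) :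
    Delta Γ k (emd d) = Circle.exp (2 * π / k) := by
  simp only [Delta, emd]
  rw [dif_neg (by omega)]
  simp
lemma Delta_em1 {d : ℕ} (Γ : Fin d → Circle) (k : ℕ) : Delta Γ k (em1 d) = 1 := by
  simp only [Delta, em1]
  simp
lemma Delta_em2 {d : ℕ} (Γ : Fin d → Circle) (k : ℕ) : Delta Γ k (em2 d) = 1 := by
  simp only [Delta, em2]
  simp

lemma Delta_pow_em0 {d : ℕ} (Γ : Fin d → Circle) (k n : ℕ) (i : Fin d) :
    (Delta Γ k ^ n) (em0 i) = Theta Γ k i ^ n := by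
  rw [Pi.pow_apply, Delta_em0]
lemma Delta_pow_emd {d : ℕ} (Γ : Fin d → Circle) (k n : ℕ) :
    (Delta Γ k ^ n) (emd d) = Circle.exp (2 * π * n / k) := by
  rw [Pi.pow_apply, Delta_emd, exp_pow]
  congr 1
  ring
lemma Delta_pow_em1 {d : ℕ} (Γ : Fin d → Circle) (k n : ℕ) :
    (Delta Γ k ^ n) (em1 d) = 1 := by rw [Pi.pow_apply, Delta_em1, one_pow]
lemma Delta_pow_em2 {d : ℕ} (Γ : Fin d → Circle) (k n : ℕ) :
    (Delta Γ k ^ n) (em2 d) = 1 := by rw [Pi.pow_apply, Delta_em2, one_pow]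

/-! ### The target sets -/

noncomputable def occIdx {B : Type*} (β : ℕ → B) (b : B) : ℕ := sInf {n | β n = b}

lemma occIdx_spec {B : Type*} (β : ℕ → B) (b : B) (h : ∃ n, β n = b) :
    β (occIdx β b) = b :=
  Nat.sInf_mem (s := {n | β n = b}) h

lemma occIdx_inj {B : Type*} (β : ℕ → B) {b b' : B} (h : ∃ n, β n = b) (h' : ∃ n, β n = b')
    (hne : b ≠ b') : occIdx β b ≠ occIdx β b' := by
  intro he
  apply hne
  rw [← occIdx_spec β b h, ← occIdx_spec β b' h', he]

def pipePiece {d : ℕ} (k : ℕ) (Θ : Fin d → Circle) (SA : Set (Fin d → Circle)) (r m : ℕ) :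
    Set (Fin (d+3) → Circle) :=
  {z | (fun i => (Θ i ^ r)⁻¹ * z (em0 i)) ∈ SA ∧ z (emd d) ∈ Zarc k r ∧
       (z (em1 d), z (em2 d)) ∈ PSet m}

def pipeSet {A B : Type*} (τ : A → List B) (β : ℕ → B) (k : ℕ) {d : ℕ}
    (Θ : Fin d → Circle) (S : A → Set (Fin d → Circle)) (b : B) :
    Set (Fin (d+3) → Circle) :=
  ⋃ (a : A) (r : Fin k) (_ : (τ a)[(r : ℕ)]? = some b),
    pipePiece k Θ (S a) (r : ℕ) (occIdx β b)

def sliceSet (d m : ℕ) : Set (Fin (d+3) → Circle) :=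
  {z | (z (em1 d), z (em2 d)) ∈ QSet m}

noncomputable def TSet {A B : Type*} (τ : A → List B) (β : ℕ → B) (k : ℕ) {d : ℕ}
    (Θ : Fin d → Circle) (S : A → Set (Fin d → Circle)) (b : B) :
    Set (Fin (d+3) → Circle) :=
  @ite _ (∃ n, β n = b) (Classical.propDecidable _)
    (pipeSet τ β k Θ S b ∪ sliceSet d (occIdx β b)) ∅

lemma TSet_pos {A B : Type*} (τ : A → List B) (β : ℕ → B) (k : ℕ) {d : ℕ}
    (Θ : Fin d → Circle) (S : A → Set (Fin d → Circle)) {b : B} (h : ∃ n, β n = b) :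
    TSet τ β k Θ S b = pipeSet τ β k Θ S b ∪ sliceSet d (occIdx β b) := by
  rw [TSet, if_pos h]

lemma TSet_neg {A B : Type*} (τ : A → List B) (β : ℕ → B) (k : ℕ) {d : ℕ}
    (Θ : Fin d → Circle) (S : A → Set (Fin d → Circle)) {b : B} (h : ¬ ∃ n, β n = b) :
    TSet τ β k Θ S b = ∅ := by
  rw [TSet, if_neg h]



/-! ### The deformation map -/

def Gmap (d : ℕ) (z : Fin (d+3) → Circle) (p : Circle × Circle) : Fin (d+3) → Circle :=
  fun j => if j = em1 d then p.1 else if j = em2 d then p.2 else z j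

variable {d : ℕ}

lemma Gmap_em1 (z : Fin (d+3) → Circle) (p : Circle × Circle) : Gmap d z p (em1 d) = p.1 :=
  if_pos rfl

lemma Gmap_em2 (z : Fin (d+3) → Circle) (p : Circle × Circle) : Gmap d z p (em2 d) = p.2 := by
  rw [Gmap, if_neg (em2_ne_em1 d), if_pos rfl]

lemma Gmap_em0 (z : Fin (d+3) → Circle) (p : Circle × Circle) (i : Fin d) :
    Gmap d z p (em0 i) = z (em0 i) := by
  rw [Gmap, if_neg (em0_ne_em1 i), if_neg (em0_ne_em2 i)]

lemma Gmap_emd (z : Fin (d+3) → Circle) (p : Circle × Circle) :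
    Gmap d z p (emd d) = z (emd d) := by
  rw [Gmap, if_neg (emd_ne_em1 d), if_neg (emd_ne_em2 d)]

lemma Gmap_pair_self (z : Fin (d+3) → Circle) : Gmap d z (z (em1 d), z (em2 d)) = z := by
  funext j
  by_cases h1 : j = em1 d
  · rw [Gmap, if_pos h1, h1]
  · by_cases h2 : j = em2 d
    · rw [Gmap, if_neg h1, if_pos h2, h2]
    · rw [Gmap, if_neg h1, if_neg h2]

lemma continuous_gmap (d : ℕ) :
    Continuous (fun w : (Fin (d+3) → Circle) × (Circle × Circle) => Gmap d w.1 w.2) := by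
  apply continuous_pi
  intro j
  by_cases h1 : j = em1 d
  · have he : (fun w : (Fin (d+3) → Circle) × (Circle × Circle) => Gmap d w.1 w.2 j)
        = fun w => w.2.1 := by
      funext w; rw [Gmap, if_pos h1]
    rw [he]; exact continuous_fst.comp continuous_snd
  · by_cases h2 : j = em2 d
    · have he : (fun w : (Fin (d+3) → Circle) × (Circle × Circle) => Gmap d w.1 w.2 j)
          = fun w => w.2.2 := by
        funext w; rw [Gmap, if_neg h1, if_pos h2]
      rw [he]; exact continuous_snd.comp continuous_snd
    · have he : (fun w : (Fin (d+3) → Circle) × (Circle × Circle) => Gmap d w.1 w.2 j)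
          = fun w => w.1 j := by
        funext w; rw [Gmap, if_neg h1, if_neg h2]
      rw [he]; exact (continuous_apply j).comp continuous_fst

/-! ### Membership -/

variable {A B : Type*}

lemma pipe_fun_eq (Γ : Fin d → Circle) {k : ℕ} (hk : 0 < k) {n q r : ℕ}
    (hqr : k * q + r = n) :
    (fun i => ((Theta Γ k) i ^ r)⁻¹ * ((Delta Γ k ^ n) (em0 i))) = Γ ^ q := by
  funext i
  rw [Delta_pow_em0, Pi.pow_apply]
  have h1 : (Theta Γ k i) ^ n = (Γ i) ^ q * (Theta Γ k i) ^ r := by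
    calc (Theta Γ k i) ^ n = (Theta Γ k i) ^ (k * q + r) := by rw [hqr]
    _ = ((Theta Γ k i) ^ k) ^ q * (Theta Γ k i) ^ r := by rw [pow_add, pow_mul]
    _ = (Γ i) ^ q * (Theta Γ k i) ^ r := by rw [Theta_pow Γ hk]
  rw [h1, mul_comm ((Γ i) ^ q), ← mul_assoc, inv_mul_cancel, one_mul]

lemma natmod_int (n k : ℕ) : ((n % k : ℕ) : ℤ) = (n : ℤ) % (k : ℤ) := by
  push_cast
  ring_nf

lemma mem_TSet_iff (τ : A → List B) (α : ℕ → A) (β : ℕ → B) {k : ℕ} (hk : 0 < k)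
    (Γ : Fin d → Circle) (S : A → Set (Fin d → Circle))
    (hg : Generates Γ S α)
    (hβ : ∀ q r, r < k → (τ (α q))[r]? = some (β (q * k + r)))
    (n : ℕ) (b : B) :
    Delta Γ k ^ n ∈ TSet τ β k (Theta Γ k) S b ↔ β n = b := by
  constructor
  · intro hz
    by_cases hocc : ∃ n', β n' = b
    swap
    · rw [TSet_neg _ _ _ _ _ hocc] at hz; exact absurd hz (notMem_empty _)
    rw [TSet_pos _ _ _ _ _ hocc] at hz
    rcases hz with hz | hz
    · simp only [pipeSet, mem_iUnion] at hz
      obtain ⟨a, r, hget, hS, hZ, -⟩ := hz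
      rw [Delta_pow_emd] at hZ
      have hZ' : Circle.exp (2 * π * ((n : ℤ) : ℝ) / k) ∈ Zarc k (r : ℕ) := by
        have : ((n : ℤ) : ℝ) = (n : ℝ) := by push_cast; ring
        rw [this]; exact hZ
      have hmod : (n : ℤ) % (k : ℤ) = ((r : ℕ) : ℤ) :=
        (exp_mem_Zarc_iff hk r.2 (n : ℤ)).1 hZ'
      have hint := natmod_int n k
      have hrval : (r : ℕ) = n % k := by omega
      have hqr : k * (n / k) + (r : ℕ) = n := by
        rw [hrval]; exact Nat.div_add_mod n k
      rw [pipe_fun_eq Γ hk hqr] at hS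
      have ha : α (n / k) = a := (hg.2.2 (n / k) a).2 hS
      have hβ' := hβ (n / k) (r : ℕ) r.2
      rw [ha, hget] at hβ'
      have hb : b = β (n / k * k + (r : ℕ)) := by injection hβ'
      rw [hb]
      congr 1
      rw [Nat.mul_comm, hrval]
      exact (Nat.div_add_mod n k).symm
    · exfalso
      have h1 := Delta_pow_em1 Γ k n
      have h2 := Delta_pow_em2 Γ k n
      have hz' : ((Delta Γ k ^ n) (em1 d), (Delta Γ k ^ n) (em2 d)) ∈ QSet (occIdx β b) := hz
      rw [h1, h2] at hz'
      exact one_one_not_mem_QSet _ hz'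
  · intro hb
    have hocc : ∃ n', β n' = b := ⟨n, hb⟩
    rw [TSet_pos _ _ _ _ _ hocc]
    left
    simp only [pipeSet, mem_iUnion]
    have hrk : n % k < k := Nat.mod_lt _ hk
    refine ⟨α (n / k), ⟨n % k, hrk⟩, ?_, ?_, ?_, ?_⟩
    · rw [hβ (n / k) (n % k) hrk]
      have he : n / k * k + n % k = n := by rw [Nat.mul_comm]; exact Nat.div_add_mod n k
      rw [he, hb]
    · have hqr : k * (n / k) + (n % k) = n := Nat.div_add_mod n k
      rw [pipe_fun_eq Γ hk hqr]
      exact (hg.2.2 (n / k) (α (n / k))).1 rfl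
    · rw [Delta_pow_emd]
      have : (2 : ℝ) * π * n / k = 2 * π * ((n : ℤ) : ℝ) / k := by push_cast; ring
      rw [this]
      apply (exp_mem_Zarc_iff hk hrk (n : ℤ)).2
      exact (natmod_int n k).symm
    · rw [Delta_pow_em1, Delta_pow_em2]
      exact one_one_mem_PSet _

/-! ### Disjointness -/

lemma TSet_disjoint (τ : A → List B) (β : ℕ → B) {k : ℕ} (hk : 0 < k)
    (Θ : Fin d → Circle) (S : A → Set (Fin d → Circle))
    (hpair : Pairwise (fun a a' => Disjoint (S a) (S a')))
    {b b' : B} (hne : b ≠ b') :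
    Disjoint (TSet τ β k Θ S b) (TSet τ β k Θ S b') := by
  rw [Set.disjoint_left]
  intro z hz hz'
  by_cases hocc : ∃ n, β n = b
  swap
  · rw [TSet_neg _ _ _ _ _ hocc] at hz; exact absurd hz (notMem_empty _)
  by_cases hocc' : ∃ n, β n = b'
  swap
  · rw [TSet_neg _ _ _ _ _ hocc'] at hz'; exact absurd hz' (notMem_empty _)
  rw [TSet_pos _ _ _ _ _ hocc] at hz
  rw [TSet_pos _ _ _ _ _ hocc'] at hz'
  have hidx : occIdx β b ≠ occIdx β b' := occIdx_inj β hocc hocc' hne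
  rcases hz with hz | hz <;> rcases hz' with hz' | hz'
  · simp only [pipeSet, mem_iUnion] at hz hz'
    obtain ⟨a, r, hget, hS, hZ, -⟩ := hz
    obtain ⟨a', r', hget', hS', hZ', -⟩ := hz'
    have hrr : (r : ℕ) = (r' : ℕ) := by
      by_contra hrr
      have hd := Zarc_disjoint hk r.2 r'.2 hrr
      exact absurd (mem_inter hZ hZ') (by rw [hd]; exact notMem_empty _)
    have haa : a ≠ a' := by
      rintro rfl
      rw [hrr, hget'] at hget
      exact hne (Option.some.inj hget).symm
    have hdisj : Disjoint (S a) (S a') := hpair haa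
    rw [hrr] at hS
    exact Set.disjoint_left.mp hdisj hS hS'
  · simp only [pipeSet, mem_iUnion] at hz
    obtain ⟨a, r, hget, -, -, hP⟩ := hz
    have hd := PSet_inter_QSet hidx
    have hq : (z (em1 d), z (em2 d)) ∈ QSet (occIdx β b') := hz'
    have hm : (z (em1 d), z (em2 d)) ∈ PSet (occIdx β b) ∩ QSet (occIdx β b') := ⟨hP, hq⟩
    rw [hd] at hm
    exact absurd hm (notMem_empty _)
  · simp only [pipeSet, mem_iUnion] at hz'
    obtain ⟨a, r, hget, -, -, hP⟩ := hz'
    have hd := PSet_inter_QSet hidx.symm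
    have hq : (z (em1 d), z (em2 d)) ∈ QSet (occIdx β b) := hz
    have hm : (z (em1 d), z (em2 d)) ∈ PSet (occIdx β b') ∩ QSet (occIdx β b) := ⟨hP, hq⟩
    rw [hd] at hm
    exact absurd hm (notMem_empty _)
  · have hd := QSet_inter_QSet hidx
    have hq : (z (em1 d), z (em2 d)) ∈ QSet (occIdx β b) := hz
    have hq' : (z (em1 d), z (em2 d)) ∈ QSet (occIdx β b') := hz'
    have hm : (z (em1 d), z (em2 d)) ∈ QSet (occIdx β b) ∩ QSet (occIdx β b') := ⟨hq, hq'⟩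
    rw [hd] at hm
    exact absurd hm (notMem_empty _)


/-! ### Preconnectedness -/

lemma pipe_mem_pair {τ : A → List B} {β : ℕ → B} {k : ℕ} {Θ : Fin d → Circle}
    {S : A → Set (Fin d → Circle)} {b : B} {x : Fin (d+3) → Circle}
    (hx : x ∈ pipeSet τ β k Θ S b) :
    (x (em1 d), x (em2 d)) ∈ PSet (occIdx β b) := by
  simp only [pipeSet, mem_iUnion] at hx
  obtain ⟨a, r, hget, -, -, hP⟩ := hx
  exact hP

lemma Gmap_image_subset {τ : A → List B} {β : ℕ → B} {k : ℕ} {Θ : Fin d → Circle}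
    {S : A → Set (Fin d → Circle)} {b : B} {x : Fin (d+3) → Circle}
    (hx : x ∈ pipeSet τ β k Θ S b) :
    Gmap d x '' (PSet (occIdx β b) ∪ QSet (occIdx β b))
      ⊆ pipeSet τ β k Θ S b ∪ sliceSet d (occIdx β b) := by
  rintro _ ⟨p, hp, rfl⟩
  rcases hp with hp | hp
  · left
    simp only [pipeSet, mem_iUnion] at hx ⊢
    obtain ⟨a, r, hget, hS, hZ, -⟩ := hx
    refine ⟨a, r, hget, ?_, ?_, ?_⟩
    · have he : (fun i => (Θ i ^ (r : ℕ))⁻¹ * Gmap d x p (em0 i))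
          = fun i => (Θ i ^ (r : ℕ))⁻¹ * x (em0 i) := by
        funext i; rw [Gmap_em0]
      rw [he]; exact hS
    · rw [Gmap_emd]; exact hZ
    · rw [Gmap_em1, Gmap_em2]; exact hp
  · right
    show (Gmap d x p (em1 d), Gmap d x p (em2 d)) ∈ QSet (occIdx β b)
    rw [Gmap_em1, Gmap_em2]
    exact hp

lemma isPreconnected_sliceSet (m : ℕ) : IsPreconnected (sliceSet d m) := by
  haveI : PreconnectedSpace Circle := ⟨isPreconnected_univ_circle⟩
  have himg : sliceSet d m
      = (fun w : (Fin (d+3) → Circle) × (Circle × Circle) => Gmap d w.1 w.2)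
        '' (univ ×ˢ QSet m) := by
    ext z
    constructor
    · intro hzm
      exact ⟨(z, (z (em1 d), z (em2 d))), ⟨mem_univ _, hzm⟩, Gmap_pair_self z⟩
    · rintro ⟨⟨w, p⟩, ⟨-, hp⟩, rfl⟩
      show (Gmap d w p (em1 d), Gmap d w p (em2 d)) ∈ QSet m
      rw [Gmap_em1, Gmap_em2]
      exact hp
  rw [himg]
  exact (isPreconnected_univ.prod (isPreconnected_QSet m)).image _
    (continuous_gmap d).continuousOn

lemma isPreconnected_TSet (τ : A → List B) (β : ℕ → B) (k : ℕ) (Θ : Fin d → Circle)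
    (S : A → Set (Fin d → Circle)) (b : B) :
    IsPreconnected (TSet τ β k Θ S b) := by
  by_cases hocc : ∃ n, β n = b
  swap
  · rw [TSet_neg _ _ _ _ _ hocc]; exact isPreconnected_empty
  rw [TSet_pos _ _ _ _ _ hocc]
  set m := occIdx β b with hm
  -- the collection of sets
  set c : Set (Set (Fin (d+3) → Circle)) :=
    insert (sliceSet d m)
      ((fun x => sliceSet d m ∪ Gmap d x '' (PSet m ∪ QSet m)) '' (pipeSet τ β k Θ S b))
    with hc
  have hGq : ∀ x : Fin (d+3) → Circle, Gmap d x (qpt m) ∈ sliceSet d m := by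
    intro x
    show (Gmap d x (qpt m) (em1 d), Gmap d x (qpt m) (em2 d)) ∈ QSet m
    rw [Gmap_em1, Gmap_em2]
    have := qpt_mem m
    simpa using this
  set z0 : Fin (d+3) → Circle := Gmap d (fun _ => 1) (qpt m) with hz0def
  have hz0 : z0 ∈ sliceSet d m := hGq _
  have H1 : ∀ s ∈ c, z0 ∈ s := by
    intro s hs
    rcases mem_insert_iff.1 hs with rfl | ⟨x, hx, rfl⟩
    · exact hz0
    · exact Or.inl hz0
  have H2 : ∀ s ∈ c, IsPreconnected s := by
    intro s hs
    rcases mem_insert_iff.1 hs with rfl | ⟨x, hx, rfl⟩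
    · exact isPreconnected_sliceSet m
    · apply IsPreconnected.union (Gmap d x (qpt m))
      · exact hGq x
      · exact ⟨qpt m, Or.inr (qpt_mem m), rfl⟩
      · exact isPreconnected_sliceSet m
      · exact (isPreconnected_PSet_union_QSet m).image _
          ((continuous_gmap d).comp (Continuous.prodMk_right x)).continuousOn
  have hums : ⋃₀ c = pipeSet τ β k Θ S b ∪ sliceSet d m := by
    apply Subset.antisymm
    · apply sUnion_subset
      intro s hs
      rcases mem_insert_iff.1 hs with rfl | ⟨x, hx, rfl⟩
      · exact subset_union_right
      · exact union_subset subset_union_right (Gmap_image_subset hx)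
    · intro z hz
      rcases hz with hz | hz
      · refine ⟨_, mem_insert_of_mem _ ⟨z, hz, rfl⟩, Or.inr ?_⟩
        exact ⟨(z (em1 d), z (em2 d)), Or.inl (pipe_mem_pair hz), Gmap_pair_self z⟩
      · exact ⟨_, mem_insert _ _, hz⟩
  rw [← hums]
  exact isPreconnected_sUnion z0 c H1 H2

lemma subsingleton_cc {X : Type*} [TopologicalSpace X] [PreconnectedSpace X] :
    Subsingleton (ConnectedComponents X) := by
  constructor
  intro x y
  obtain ⟨x, rfl⟩ := ConnectedComponents.surjective_coe x
  obtain ⟨y, rfl⟩ := ConnectedComponents.surjective_coe y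
  rw [ConnectedComponents.coe_eq_coe, PreconnectedSpace.connectedComponent_eq_univ,
    PreconnectedSpace.connectedComponent_eq_univ]

lemma TSet_finite_components (τ : A → List B) (β : ℕ → B) (k : ℕ) (Θ : Fin d → Circle)
    (S : A → Set (Fin d → Circle)) (b : B) :
    Finite (ConnectedComponents ↥(TSet τ β k Θ S b)) := by
  haveI : PreconnectedSpace ↥(TSet τ β k Θ S b) :=
    Subtype.preconnectedSpace (isPreconnected_TSet τ β k Θ S b)
  haveI := subsingleton_cc (X := ↥(TSet τ β k Θ S b))
  exact Finite.of_subsingleton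

/-! ### Openness -/

lemma TSet_isOpen (τ : A → List B) (β : ℕ → B) (k : ℕ) (Θ : Fin d → Circle)
    (S : A → Set (Fin d → Circle)) (hS : ∀ a, IsOpen (S a)) (b : B) :
    IsOpen (TSet τ β k Θ S b) := by
  by_cases hocc : ∃ n, β n = b
  swap
  · rw [TSet_neg _ _ _ _ _ hocc]; exact isOpen_empty
  rw [TSet_pos _ _ _ _ _ hocc]
  apply IsOpen.union
  · apply isOpen_iUnion
    intro a
    apply isOpen_iUnion
    intro r
    apply isOpen_iUnion
    intro _
    have h1 : IsOpen {z : Fin (d+3) → Circle |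
        (fun i => (Θ i ^ (r : ℕ))⁻¹ * z (em0 i)) ∈ S a} := by
      apply IsOpen.preimage _ (hS a)
      exact continuous_pi fun i => continuous_const.mul (continuous_apply (em0 i))
    have h2 : IsOpen {z : Fin (d+3) → Circle | z (emd d) ∈ Zarc k (r : ℕ)} :=
      IsOpen.preimage (continuous_apply (emd d)) (isOpen_Zarc k (r : ℕ))
    have h3 : IsOpen {z : Fin (d+3) → Circle |
        (z (em1 d), z (em2 d)) ∈ PSet (occIdx β b)} :=
      IsOpen.preimage ((continuous_apply (em1 d)).prodMk (continuous_apply (em2 d)))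
        (isOpen_PSet _)
    exact h1.inter (h2.inter h3)
  · exact IsOpen.preimage ((continuous_apply (em1 d)).prodMk (continuous_apply (em2 d)))
      (isOpen_QSet _)

/-! ### The key construction lemma -/

theorem key {A B : Type} (α : ℕ → A) (β : ℕ → B) (τ : A → List B) (k : ℕ) (hk : 0 < k)
    (hβ : ∀ q r, r < k → (τ (α q))[r]? = some (β (q * k + r)))
    {d : ℕ} (Γ : Fin d → Circle) (S : A → Set (Fin d → Circle))
    (hg : Generates Γ S α) :
    ∃ (Δ : Fin (d+3) → Circle) (T : B → Set (Fin (d+3) → Circle)),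
      Generates Δ T β ∧ ((∀ a, IsOpen (S a)) → ∀ b, IsOpen (T b)) := by
  refine ⟨Delta Γ k, TSet τ β k (Theta Γ k) S, ⟨?_, ?_, ?_⟩, ?_⟩
  · intro b b' hne
    exact TSet_disjoint τ β hk (Theta Γ k) S hg.1 hne
  · intro b
    exact TSet_finite_components τ β k (Theta Γ k) S b
  · intro n b
    exact (mem_TSet_iff τ α β hk Γ S hg hβ n b).symm
  · intro hS b
    exact TSet_isOpen τ β k (Theta Γ k) S hS b


end ToricAux

/-- The image of a toric word under a `k`-uniform morphism is toric; moreover, if the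
original word is generated with open target sets, so is the image. -/
theorem uniform_morphism_image_toric {A B : Type} (α : ℕ → A) (β : ℕ → B)
    (τ : A → List B) (k : ℕ) (hk : 0 < k)
    (huniform : ∀ a, (τ a).length = k)
    (hβ : ∀ q r, r < k → (τ (α q))[r]? = some (β (q * k + r)))
    (hα : IsToricWord α) :
    IsToricWord β ∧ (IsOpenToricWord α → IsOpenToricWord β) := by
  constructor
  · obtain ⟨d, hd, Γ, S, hg⟩ := hα
    obtain ⟨Δ, T, hgen, -⟩ := ToricAux.key α β τ k hk hβ Γ S hg
    exact ⟨d + 3, by omega, Δ, T, hgen⟩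
  · rintro ⟨d, hd, Γ, S, hg, hopen⟩
    obtain ⟨Δ, T, hgen, hT⟩ := ToricAux.key α β τ k hk hβ Γ S hg
    exact ⟨d + 3, by omega, Δ, T, hgen, hT hopen⟩
end

section
/- The merge (interleaving) of toric words α_0,…,α_{L−1}, defined by α(nL + r) = α_r(n) for 0 ≤ r < L, is toric. -/
/-!
Let `αᵣ` be coded by `Γᵣ ∈ 𝕋^{dᵣ}` with targets `Sᵣ a`. Take a primitive `L`-th root of unity `ζ`
and `L`-th roots `bᵣ` of `Γᵣ`. At time `nL + r` the point `(ζ, b₀, …, b_{L-1})` of `𝕋^{1 + Σ dᵣ}`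
has first coordinate `ζ ^ r`, which determines `r`, and its `r`-th block times `bᵣ⁻ʳ` is `Γᵣ ^ n`.
So `α` is coded by this point with targets `⋃ᵣ {x | x₀ = ζ ^ r ∧ xᵣ bᵣ⁻ʳ ∈ Sᵣ a}`: they are disjoint
because the `ζ ^ r` are distinct, and each piece is a continuous image of `Sᵣ a × 𝕋^{Σ dᵣ}`, hence
has finitely many connected components since the torus is connected.
-/

open Set Function

section ConnectedComponents

variable {X Y : Type*} [TopologicalSpace X] [TopologicalSpace Y]

theorem ConnectedComponents.coe_eq_coe_of_isPreconnected {S C : Set X} (hC : IsPreconnected C)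
    (hCS : C ⊆ S) {x y : S} (hx : (x : X) ∈ C) (hy : (y : X) ∈ C) :
    (x : ConnectedComponents S) = y := by
  have hpre : IsPreconnected ((↑) ⁻¹' C : Set S) := by
    rwa [← Topology.IsInducing.subtypeVal.isPreconnected_image, Subtype.image_preimage_coe,
      inter_eq_right.mpr hCS]
  exact ConnectedComponents.coe_eq_coe.mpr
    (connectedComponent_eq (hpre.subset_connectedComponent hx hy))

theorem finite_connectedComponents_iff_exists_sUnion {S : Set X} :
    Finite (ConnectedComponents S) ↔
      ∃ 𝒞 : Set (Set X), 𝒞.Finite ∧ (∀ C ∈ 𝒞, IsPreconnected C) ∧ ⋃₀ 𝒞 = S := by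
  constructor
  · intro _
    refine ⟨range fun q : ConnectedComponents S => (↑) '' (ConnectedComponents.mk ⁻¹' {q}),
      finite_range _, ?_, ?_⟩
    · rintro _ ⟨q, rfl⟩
      obtain ⟨x, rfl⟩ := ConnectedComponents.surjective_coe q
      dsimp only
      rw [connectedComponents_preimage_singleton]
      exact isPreconnected_connectedComponent.image _ continuous_subtype_val.continuousOn
    · rw [sUnion_range, ← image_iUnion, ← preimage_iUnion, iUnion_of_singleton, preimage_univ,
        image_univ, Subtype.range_coe]
  · rintro ⟨𝒞, h𝒞, hpre, rfl⟩
    have hcover (x : ⋃₀ 𝒞) : ∃ C ∈ 𝒞, (x : X) ∈ C := mem_sUnion.mp x.2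
    choose C hC𝒞 hxC using hcover
    have := h𝒞.to_subtype
    let rep : ConnectedComponents (⋃₀ 𝒞) → ⋃₀ 𝒞 := surjInv ConnectedComponents.surjective_coe
    refine Finite.of_injective (fun q => (⟨C (rep q), hC𝒞 _⟩ : 𝒞)) fun q q' hqq' => ?_
    have hC : C (rep q) = C (rep q') := congrArg Subtype.val hqq'
    rw [← surjInv_eq ConnectedComponents.surjective_coe q,
      ← surjInv_eq ConnectedComponents.surjective_coe q']
    exact ConnectedComponents.coe_eq_coe_of_isPreconnected (hpre _ (hC𝒞 (rep q)))
      (subset_sUnion_of_mem (hC𝒞 _)) (hxC _) (hC ▸ hxC _)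

theorem finite_connectedComponents_image {S : Set X} {f : X → Y} (hf : ContinuousOn f S)
    (hS : Finite (ConnectedComponents S)) : Finite (ConnectedComponents (f '' S)) := by
  obtain ⟨𝒞, h𝒞, hpre, rfl⟩ := finite_connectedComponents_iff_exists_sUnion.mp hS
  refine finite_connectedComponents_iff_exists_sUnion.mpr
    ⟨image f '' 𝒞, h𝒞.image _, ?_, image_sUnion.symm⟩
  rintro _ ⟨C, hC, rfl⟩
  exact (hpre C hC).image f (hf.mono (subset_sUnion_of_mem hC))

theorem finite_connectedComponents_prod {S : Set X} {T : Set Y}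
    (hS : Finite (ConnectedComponents S)) (hT : IsPreconnected T) :
    Finite (ConnectedComponents (S ×ˢ T)) := by
  obtain ⟨𝒞, h𝒞, hpre, rfl⟩ := finite_connectedComponents_iff_exists_sUnion.mp hS
  refine finite_connectedComponents_iff_exists_sUnion.mpr
    ⟨(· ×ˢ T) '' 𝒞, h𝒞.image _, ?_, sUnion_prod_const.symm⟩
  rintro _ ⟨C, hC, rfl⟩
  exact (hpre C hC).prod hT

theorem finite_connectedComponents_iUnion {ι : Type*} [Finite ι] {S : ι → Set X}
    (hS : ∀ i, Finite (ConnectedComponents (S i))) :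
    Finite (ConnectedComponents (⋃ i, S i)) := by
  choose 𝒞 h𝒞 hpre hS using fun i => finite_connectedComponents_iff_exists_sUnion.mp (hS i)
  refine finite_connectedComponents_iff_exists_sUnion.mpr
    ⟨⋃ i, 𝒞 i, finite_iUnion h𝒞, fun C hC => ?_, by simp only [sUnion_iUnion, hS]⟩
  obtain ⟨i, hi⟩ := mem_iUnion.mp hC
  exact hpre i C hi

end ConnectedComponents

section OrbitCoding

variable {A G H : Type*} [TopologicalSpace G] [TopologicalSpace H]

/-- `Generates`, with the torus replaced by an arbitrary topological monoid. -/
def IsOrbitCoding [Monoid G] (g : G) (S : A → Set G) (α : ℕ → A) : Prop :=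
  Pairwise (fun a b => Disjoint (S a) (S b)) ∧
  (∀ a, Finite (ConnectedComponents ↥(S a))) ∧
  ∀ (n : ℕ) (a : A), α n = a ↔ g ^ n ∈ S a

theorem IsOrbitCoding.map [Monoid G] [Monoid H] {g : G} {S : A → Set G} {α : ℕ → A}
    (h : IsOrbitCoding g S α) (f : G →* H) (hf : Continuous f) (hinj : Injective f) :
    IsOrbitCoding (f g) (fun a => f '' S a) α := by
  obtain ⟨hdisj, hcomp, hcode⟩ := h
  refine ⟨fun a b hab => (disjoint_image_iff hinj).mpr (hdisj hab), fun a => ?_, fun n a => ?_⟩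
  · exact finite_connectedComponents_image hf.continuousOn (hcomp a)
  · rw [hcode, ← map_pow, hinj.mem_set_image]

theorem IsOrbitCoding.isToricWord {ι : Type*} [Fintype ι] [Nonempty ι] {Γ : ι → Circle}
    {S : A → Set (ι → Circle)} {α : ℕ → A} (h : IsOrbitCoding Γ S α) : IsToricWord α := by
  let e := MulEquiv.arrowCongr (Fintype.equivFin ι) (MulEquiv.refl Circle)
  exact ⟨_, Fintype.card_pos, _, _, h.map e.toMonoidHom (continuous_pi fun _ => continuous_apply _)
    e.injective⟩

end OrbitCoding

section Merge

variable {A M : Type*} [CommMonoid M] {L : ℕ} {G : Fin L → Type*} [∀ r, Group (G r)]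

theorem IsPrimitiveRoot.fin_eq_of_pow_eq {ζ : M} (hζ : IsPrimitiveRoot ζ L) {r r' : Fin L}
    (h : ζ ^ (r : ℕ) = ζ ^ (r' : ℕ)) : r = r' :=
  Fin.ext (hζ.pow_inj r.2 r'.2 h)

def mergeTargets (ζ : M) (b : ∀ r, G r) (S : ∀ r, A → Set (G r)) (a : A) :
    Set (M × ∀ r, G r) :=
  ⋃ r : Fin L, {x | x.1 = ζ ^ (r : ℕ) ∧ x.2 r * (b r ^ (r : ℕ))⁻¹ ∈ S r a}

variable {ζ : M} {b : ∀ r, G r} {S : ∀ r, A → Set (G r)}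

theorem pow_mem_mergeTargets_iff (hζ : IsPrimitiveRoot ζ L) (n : ℕ) (r : Fin L) (a : A) :
    (ζ, b) ^ (n * L + r) ∈ mergeTargets ζ b S a ↔ (b r ^ L) ^ n ∈ S r a := by
  have hζr : ζ ^ (n * L + r) = ζ ^ (r : ℕ) := by
    rw [pow_add, pow_mul', hζ.pow_eq_one, one_pow, one_mul]
  have hbr : b r ^ (n * L + r) * (b r ^ (r : ℕ))⁻¹ = (b r ^ L) ^ n := by
    rw [pow_add, mul_inv_cancel_right, pow_mul']
  simp only [mergeTargets, mem_iUnion, mem_ofPred_eq, Prod.pow_fst, Prod.pow_snd, Pi.pow_apply]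
  constructor
  · rintro ⟨r', hr', hS⟩
    obtain rfl := hζ.fin_eq_of_pow_eq (hζr.symm.trans hr')
    rwa [hbr] at hS
  · exact fun hS => ⟨r, hζr, hbr ▸ hS⟩

theorem pairwise_disjoint_mergeTargets (hζ : IsPrimitiveRoot ζ L)
    (hS : ∀ r, Pairwise fun a a' => Disjoint (S r a) (S r a')) :
    Pairwise fun a a' => Disjoint (mergeTargets ζ b S a) (mergeTargets ζ b S a') := by
  intro a a' haa'
  simp only [mergeTargets, disjoint_iUnion_left, disjoint_iUnion_right]
  intro r r'
  refine disjoint_left.mpr fun x ⟨hr, hxS⟩ ⟨hr', hxS'⟩ => ?_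
  obtain rfl := hζ.fin_eq_of_pow_eq (hr.symm.trans hr')
  exact disjoint_left.mp (hS _ haa') hxS hxS'

theorem finite_connectedComponents_mergeTargets [TopologicalSpace M]
    [∀ r, TopologicalSpace (G r)] [∀ r, ContinuousMul (G r)] [∀ r, PreconnectedSpace (G r)]
    (hS : ∀ r a, Finite (ConnectedComponents (S r a))) (a : A) :
    Finite (ConnectedComponents (mergeTargets ζ b S a)) := by
  refine finite_connectedComponents_iUnion fun r => ?_
  have hpiece : {x : M × ∀ i, G i | x.1 = ζ ^ (r : ℕ) ∧ x.2 r * (b r ^ (r : ℕ))⁻¹ ∈ S r a} =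
      (fun p : G r × ∀ i, G i => (ζ ^ (r : ℕ), update p.2 r (p.1 * b r ^ (r : ℕ)))) ''
        (S r a ×ˢ univ) := by
    ext ⟨x₁, x₂⟩
    simp only [mem_ofPred_eq, mem_image, mem_prod, mem_univ, and_true, Prod.mk.injEq, Prod.exists]
    constructor
    · rintro ⟨rfl, hx⟩
      exact ⟨_, x₂, hx, rfl, by rw [inv_mul_cancel_right, update_eq_self]⟩
    · rintro ⟨s, y, hs, rfl, rfl⟩
      simpa using hs
  rw [hpiece]
  refine finite_connectedComponents_image (Continuous.continuousOn ?_)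
    (finite_connectedComponents_prod (hS r a) isPreconnected_univ)
  fun_prop

theorem IsOrbitCoding.merge [TopologicalSpace M] [∀ r, TopologicalSpace (G r)]
    [∀ r, ContinuousMul (G r)] [∀ r, PreconnectedSpace (G r)]
    (hL : 0 < L) (hζ : IsPrimitiveRoot ζ L) {αs : Fin L → ℕ → A} {α : ℕ → A}
    (hmerge : ∀ (n : ℕ) (r : Fin L), α (n * L + r) = αs r n)
    (h : ∀ r, IsOrbitCoding (b r ^ L) (S r) (αs r)) :
    IsOrbitCoding (ζ, b) (mergeTargets ζ b S) α := by
  refine ⟨pairwise_disjoint_mergeTargets hζ fun r => (h r).1,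
    finite_connectedComponents_mergeTargets fun r => (h r).2.1, fun m a => ?_⟩
  obtain ⟨n, r, rfl⟩ : ∃ (n : ℕ) (r : Fin L), m = n * L + r :=
    ⟨m / L, ⟨m % L, Nat.mod_lt m hL⟩, (Nat.div_add_mod' m L).symm⟩
  rw [hmerge, pow_mem_mergeTargets_iff hζ, (h r).2.2]

end Merge

theorem Circle.exists_pow_eq {n : ℕ} (hn : n ≠ 0) (z : Circle) : ∃ w : Circle, w ^ n = z :=
  ⟨Circle.exp (Complex.arg z / n), by
    rw [← Circle.exp_natCast_mul, mul_div_cancel₀ _ (Nat.cast_ne_zero.mpr hn), Circle.exp_arg]⟩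

section Flatten

variable (M : Type*) [Monoid M] {ι : Type*} (κ : ι → Type*)

def flattenProdPi : (M × ∀ i, κ i → M) →* (Option (Σ i, κ i) → M) where
  toFun x o := o.elim x.1 fun p => x.2 p.1 p.2
  map_one' := by funext o; cases o <;> rfl
  map_mul' _ _ := by funext o; cases o <;> rfl

variable {M κ}

theorem injective_flattenProdPi : Injective (flattenProdPi M κ) := fun _ _ h =>
  Prod.ext (congrFun h none) (funext fun i => funext fun j => congrFun h (some ⟨i, j⟩))

theorem continuous_flattenProdPi [TopologicalSpace M] : Continuous (flattenProdPi M κ) :=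
  continuous_pi fun o => by cases o <;> dsimp [flattenProdPi] <;> fun_prop

end Flatten

/-- The merge (interleaving) of toric words is toric. -/
theorem merge_of_toric_is_toric {A : Type} (L : ℕ) (hL : 0 < L)
    (αs : Fin L → ℕ → A) (α : ℕ → A)
    (hmerge : ∀ (n : ℕ) (r : Fin L), α (n * L + (r : ℕ)) = αs r n)
    (h : ∀ r, IsToricWord (αs r)) :
    IsToricWord α := by
  have : NeZero L := ⟨hL.ne'⟩
  obtain ⟨ζ, hζ⟩ := HasEnoughRootsOfUnity.exists_primitiveRoot Circle L
  choose d _ Γ S hΓ using h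
  choose b hb using fun r j => Circle.exists_pow_eq hL.ne' (Γ r j)
  have hbΓ : ∀ r, b r ^ L = Γ r := fun r => funext (hb r)
  have hcode : IsOrbitCoding (ζ, b) (mergeTargets ζ b S) α :=
    IsOrbitCoding.merge hL hζ hmerge fun r => hbΓ r ▸ hΓ r
  exact (hcode.map _ continuous_flattenProdPi injective_flattenProdPi).isToricWord
end

section
/- Every toric word α generated by a pair (Γ, {S_a}) in which all target sets S_a are open subsets of 𝕋^d is strongly almost-periodic: every finite word w either does not occur in α, or there is a bound R such that w occurs in every factor of α of length R. -/
/-- Every toric word with open target sets is strongly almost-periodic. -/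
theorem open_toric_strongly_almost_periodic {A : Type} (α : ℕ → A)
    (h : IsOpenToricWord α) : StronglyAlmostPeriodic α := by
  obtain ⟨d, -, Γ, S, ⟨-, -, hgen⟩, hopen⟩ := h
  intro w
  by_cases hocc : ∃ n₀, Occurs w α n₀
  · obtain ⟨n₀, h₀⟩ := hocc
    right
    set U : Set (Fin d → Circle) :=
      ⋂ i : Fin w.length, (fun x => x * Γ ^ (i : ℕ)) ⁻¹' S (w.get i) with hU
    have hUopen : IsOpen U :=
      isOpen_iInter_of_finite fun i => (hopen _).preimage (continuous_mul_right _)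
    have hOccU : ∀ n, Occurs w α n ↔ Γ ^ n ∈ U := by
      intro n
      constructor
      · intro hn
        refine Set.mem_iInter.2 fun i => ?_
        have := (hgen (n + i) (w.get i)).1 (hn i)
        simpa [pow_add] using this
      · intro hn i
        refine (hgen (n + i) (w.get i)).2 ?_
        have := Set.mem_iInter.1 hn i
        simpa [pow_add] using this
    have hx₀ : Γ ^ n₀ ∈ U := (hOccU n₀).1 h₀
    set W : Set (Fin d → Circle) := (fun v => Γ ^ n₀ * v) ⁻¹' U with hW
    have hWopen : IsOpen W := hUopen.preimage (continuous_mul_left _)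
    have hW1 : (1 : Fin d → Circle) ∈ W := by simpa [hW] using hx₀
    set H : Set (Fin d → Circle) := closure (Set.range fun n : ℕ => Γ ^ n) with hH
    have hHcompact : IsCompact H := isClosed_closure.isCompact
    have hopens : ∀ n : ℕ, IsOpen ((fun x => x * (Γ ^ n)⁻¹) ⁻¹' W) := fun n =>
      hWopen.preimage (continuous_mul_right _)
    have hcover : H ⊆ ⋃ n : ℕ, (fun x => x * (Γ ^ n)⁻¹) ⁻¹' W := by
      intro x hx
      have hOopen : IsOpen {y : Fin d → Circle | x * y⁻¹ ∈ W} :=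
        hWopen.preimage (by fun_prop)
      have hx' : x ∈ {y : Fin d → Circle | x * y⁻¹ ∈ W} := by
        simp [hW1]
      obtain ⟨y, hyO, hyr⟩ := mem_closure_iff.1 hx _ hOopen hx'
      obtain ⟨n, rfl⟩ := hyr
      exact Set.mem_iUnion.2 ⟨n, hyO⟩
    obtain ⟨t, ht⟩ := hHcompact.elim_finite_subcover _ hopens hcover
    set N : ℕ := t.sup id with hN
    refine ⟨N + n₀ + w.length, fun n => ?_⟩
    have hmem : Γ ^ (n + N) ∈ H := subset_closure ⟨n + N, rfl⟩
    obtain ⟨i, hit, hi⟩ := Set.mem_iUnion₂.1 (ht hmem)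
    have hiN : i ≤ N := Finset.le_sup (f := id) hit
    have hpow : Γ ^ (n + N) * (Γ ^ i)⁻¹ = Γ ^ (n + N - i) := by
      have : Γ ^ (n + N) = Γ ^ (n + N - i) * Γ ^ i := by
        rw [← pow_add]; congr 1; omega
      rw [this, mul_inv_cancel_right]
    have hWmem : Γ ^ (n + N - i) ∈ W := by rw [← hpow]; exact hi
    have hUmem : Γ ^ (n₀ + (n + N - i)) ∈ U := by
      have := hWmem
      rw [hW] at this
      simpa [pow_add] using this
    refine ⟨n₀ + (n + N - i), by omega, by omega, (hOccU _).2 hUmem⟩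
  · left
    push_neg at hocc
    exact hocc
end

section
/- If a word α ∈ Σ^ω has at most n distinct factors of length n for some n > 0, then α is eventually periodic. -/
private lemma mh_det {A : Type} [Finite A] (α : ℕ → A) (k : ℕ)
    (hk : ∀ m m' : ℕ, (∀ i < k, α (m + i) = α (m' + i)) → α (m + k) = α (m' + k)) :
    ∃ N p : ℕ, 0 < p ∧ ∀ m : ℕ, N ≤ m → α (m + p) = α m := by
  have key : ∀ m1 m2 : ℕ, m1 < m2 → (∀ i < k, α (m1 + i) = α (m2 + i)) →
      ∃ N p : ℕ, 0 < p ∧ ∀ m : ℕ, N ≤ m → α (m + p) = α m := by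
    intro m1 m2 hlt hw
    have claim : ∀ j, ∀ i < k, α (m1 + j + i) = α (m2 + j + i) := by
      intro j
      induction j with
      | zero => simpa using hw
      | succ j ih =>
        intro i hi
        rcases Nat.lt_or_ge (i + 1) k with h1 | h1
        · have e1 : m1 + (j + 1) + i = m1 + j + (i + 1) := by omega
          have e2 : m2 + (j + 1) + i = m2 + j + (i + 1) := by omega
          rw [e1, e2]; exact ih (i + 1) h1
        · have hik : i + 1 = k := by omega
          have e1 : m1 + (j + 1) + i = m1 + j + k := by omega
          have e2 : m2 + (j + 1) + i = m2 + j + k := by omega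
          rw [e1, e2]; exact hk (m1 + j) (m2 + j) ih
    refine ⟨m1 + k, m2 - m1, by omega, ?_⟩
    intro m hm
    set j := m - (m1 + k) with hj
    have e1 : m = m1 + j + k := by omega
    have e2 : m + (m2 - m1) = m2 + j + k := by omega
    rw [e2, e1]
    exact (hk (m1 + j) (m2 + j) (claim j)).symm
  obtain ⟨a, b, hab, heq⟩ :=
    Finite.exists_ne_map_eq_of_infinite (fun m => fun i : Fin k => α (m + i))
  have hw : ∀ i < k, α (a + i) = α (b + i) := fun i hi => congrFun heq ⟨i, hi⟩
  rcases hab.lt_or_gt with hlt | hlt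
  · exact key a b hlt hw
  · exact key b a hlt (fun i hi => (hw i hi).symm)

/-- **Morse–Hedlund.** If a word has at most `n` distinct factors of length `n` for some
`n > 0`, then it is eventually periodic. -/
theorem morse_hedlund {A : Type} [Finite A] (α : ℕ → A) (n : ℕ) (hn : 0 < n)
    (h : {f : Fin n → A | ∃ m : ℕ, ∀ i : Fin n, α (m + i) = f i}.ncard ≤ n) :
    ∃ N p : ℕ, 0 < p ∧ ∀ m : ℕ, N ≤ m → α (m + p) = α m := by
  classical
  by_cases hdet : ∃ k, ∀ m m' : ℕ, (∀ i < k, α (m + i) = α (m' + i)) → α (m + k) = α (m' + k)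
  · obtain ⟨k, hk⟩ := hdet
    exact mh_det α k hk
  · exfalso
    push_neg at hdet
    have hmain : ∀ k, k + 1 ≤ {f : Fin k → A | ∃ m : ℕ, ∀ i : Fin k, α (m + i) = f i}.ncard := by
      intro k
      induction k with
      | zero =>
        have hne : ({f : Fin 0 → A | ∃ m : ℕ, ∀ i : Fin 0, α (m + i) = f i}).Nonempty := ⟨fun i => α (0 + i), 0, fun i => rfl⟩
        have := (Set.ncard_pos (Set.toFinite _)).mpr hne
        exact this
      | succ k ih =>
        obtain ⟨m, m', hw, hne⟩ := hdet k
        set r : (Fin (k + 1) → A) → (Fin k → A) := fun f i => f i.castSucc with hr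
        set g : Fin (k + 1) → A := fun i => α (m' + i) with hg
        have hgS : g ∈ {f : Fin (k+1) → A | ∃ m : ℕ, ∀ i : Fin (k+1), α (m + i) = f i} := ⟨m', fun i => rfl⟩
        have hsub : {f : Fin k → A | ∃ m : ℕ, ∀ i : Fin k, α (m + i) = f i} ⊆ r '' ({f : Fin (k+1) → A | ∃ m : ℕ, ∀ i : Fin (k+1), α (m + i) = f i} \ {g}) := by
          rintro e ⟨m0, hm0⟩
          set f0 : Fin (k + 1) → A := fun i => α (m0 + i) with hf0
          set f1 : Fin (k + 1) → A := fun i => α (m + i) with hf1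
          have hrf0 : r f0 = e := by
            funext i
            have : (i.castSucc : ℕ) = (i : ℕ) := rfl
            simp only [hr, hf0, this]
            exact hm0 i
          have hrf1g : r f1 = r g := by
            funext i
            simp only [hr, hf1, hg]
            exact hw i i.isLt
          have hf1g : f1 ≠ g := by
            intro hcon
            apply hne
            have := congrFun hcon ⟨k, Nat.lt_succ_self k⟩
            simpa [hf1, hg] using this
          by_cases hc : f0 = g
          · exact ⟨f1, ⟨⟨m, fun i => rfl⟩, hf1g⟩, by rw [hrf1g, ← hc, hrf0]⟩
          · exact ⟨f0, ⟨⟨m0, fun i => rfl⟩, hc⟩, hrf0⟩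
        have h1 : {f : Fin k → A | ∃ m : ℕ, ∀ i : Fin k, α (m + i) = f i}.ncard ≤ (r '' ({f : Fin (k+1) → A | ∃ m : ℕ, ∀ i : Fin (k+1), α (m + i) = f i} \ {g})).ncard :=
          Set.ncard_le_ncard hsub (Set.toFinite _)
        have h2 : (r '' ({f : Fin (k+1) → A | ∃ m : ℕ, ∀ i : Fin (k+1), α (m + i) = f i} \ {g})).ncard ≤ ({f : Fin (k+1) → A | ∃ m : ℕ, ∀ i : Fin (k+1), α (m + i) = f i} \ {g}).ncard :=
          Set.ncard_image_le (Set.toFinite _)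
        have h3 : ({f : Fin (k+1) → A | ∃ m : ℕ, ∀ i : Fin (k+1), α (m + i) = f i} \ {g}).ncard < {f : Fin (k+1) → A | ∃ m : ℕ, ∀ i : Fin (k+1), α (m + i) = f i}.ncard :=
          Set.ncard_diff_singleton_lt_of_mem hgS (Set.toFinite _)
        have : k + 1 < {f : Fin (k+1) → A | ∃ m : ℕ, ∀ i : Fin (k+1), α (m + i) = f i}.ncard :=
          lt_of_le_of_lt ih (lt_of_le_of_lt (le_trans h1 h2) h3)
        exact this
    exact absurd h (by exact Nat.not_le.mpr (hmain n))
end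

section
/- Let γ ∈ 𝕋 not be a root of unity, let θ = Log(γ)/i, and let t = 1/2 + Log(γ)/(2πi). Then t is irrational, and there are infinitely many n ∈ ℕ with 0 < Log(γ^n) < 2π/n; equivalently, the fractional part of nt is less than 1/n for infinitely many n. -/
/-!
Write `s = arg γ / 2π`, so that `γ = exp (2πi s)`. Since `γ` is not a root of unity, `s` and
hence `t = 1/2 + s` are irrational, and `Log (γ ^ n) = 2πi {n s}` as soon as `{n s} < 1/2`. Both
claims therefore reduce to: `{n α} < 1/n` for infinitely many `n` when `α` is irrational.

For that, descend the Stern–Brocot tree towards `α`. Farey neighbours `p/a < α < r/b`, with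
`a r - b p = 1`, satisfy `a (1 - {b α}) + b {a α} = 1`; replacing one of them by the mediant
keeps the identity, and irrationality forces both sides to be replaced infinitely often. Whenever
`a ≤ b`, the identity gives `a {a α} ≤ b {a α} < 1`.
-/

open Real Int

theorem Irrational.fract_pos {x : ℝ} (hx : Irrational x) : 0 < fract x :=
  Int.fract_pos.mpr (hx.ne_int ⌊x⌋)

theorem Int.fract_add_of_lt_one_sub {x y : ℝ} (h : fract x < 1 - fract y) :
    fract (x + y) = fract x + fract y :=
  fract_eq_iff.mpr ⟨by linarith [fract_nonneg x, fract_nonneg y], by linarith,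
    ⌊x⌋ + ⌊y⌋, by push_cast; linarith [fract_add_floor x, fract_add_floor y]⟩

theorem Int.fract_add_of_one_sub_lt {x y : ℝ} (h : 1 - fract y < fract x) :
    fract (x + y) = fract x - (1 - fract y) :=
  fract_eq_iff.mpr ⟨by linarith, by linarith [fract_lt_one x, fract_lt_one y],
    ⌊x⌋ + ⌊y⌋ + 1, by push_cast; linarith [fract_add_floor x, fract_add_floor y]⟩

/-- `⌊a α⌋ / a < α < ⌈b α⌉ / b` are Farey neighbours: `a ⌈b α⌉ - b ⌊a α⌋ = 1`. -/
def IsFareyPair (α : ℝ) (a b : ℕ) : Prop :=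
  a * (1 - fract (b * α)) + b * fract (a * α) = 1

namespace IsFareyPair

variable {α : ℝ} {a b : ℕ}

theorem one_zero (α : ℝ) : IsFareyPair α 1 0 := by
  simp [IsFareyPair]

theorem pos_left (h : IsFareyPair α a b) : 0 < a := by
  rw [Nat.pos_iff_ne_zero]
  rintro rfl
  simp [IsFareyPair] at h

theorem mul_fract_lt_one (h : IsFareyPair α a b) (hab : a ≤ b) : a * fract (a * α) < 1 := by
  have : 0 < (a : ℝ) * (1 - fract (b * α)) :=
    mul_pos (by exact_mod_cast h.pos_left) (by linarith [fract_lt_one ((b : ℝ) * α)])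
  have : (a : ℝ) * fract (a * α) ≤ b * fract (a * α) :=
    mul_le_mul_of_nonneg_right (by exact_mod_cast hab) (fract_nonneg _)
  unfold IsFareyPair at h
  linarith

theorem add_left (h : IsFareyPair α a b) (hlt : 1 - fract (b * α) < fract (a * α)) :
    IsFareyPair α (a + b) b := by
  unfold IsFareyPair at h ⊢
  rw [Nat.cast_add, add_mul (a : ℝ) b α, fract_add_of_one_sub_lt hlt]
  linear_combination h

theorem add_right (h : IsFareyPair α a b) (hlt : fract (a * α) < 1 - fract (b * α)) :
    IsFareyPair α a (a + b) := by
  unfold IsFareyPair at h ⊢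
  rw [Nat.cast_add, add_mul (a : ℝ) b α, fract_add_of_lt_one_sub hlt]
  linear_combination h

theorem fract_ne (hα : Irrational α) (h : IsFareyPair α a b) :
    fract (a * α) ≠ 1 - fract (b * α) := by
  intro heq
  apply (hα.natCast_mul (Nat.add_pos_left h.pos_left b).ne').ne_int (⌊a * α⌋ + ⌊b * α⌋ + 1)
  push_cast
  linarith [fract_add_floor ((a : ℝ) * α), fract_add_floor ((b : ℝ) * α)]

theorem exists_left_le_right (hα : Irrational α) (h : IsFareyPair α a b) :
    ∃ a' b', IsFareyPair α a' b' ∧ a ≤ a' ∧ a' ≤ b' := by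
  obtain ⟨k, hk⟩ := exists_nat_gt (fract (a * α) / (1 - fract (b * α)))
  rw [div_lt_iff₀ (by linarith [fract_lt_one ((b : ℝ) * α)])] at hk
  induction k generalizing a with
  | zero => simp only [Nat.cast_zero, zero_mul] at hk; linarith [fract_nonneg ((a : ℝ) * α)]
  | succ k ih =>
    rcases (h.fract_ne hα).lt_or_gt with hlt | hlt
    · exact ⟨a, a + b, h.add_right hlt, le_rfl, Nat.le_add_right a b⟩
    · obtain ⟨a', b', h', ha', hab'⟩ := ih (h.add_left hlt) (by
        push_cast at hk; rw [Nat.cast_add, add_mul, fract_add_of_one_sub_lt hlt]; linarith)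
      exact ⟨a', b', h', by omega, hab'⟩

theorem exists_left_gt (hα : Irrational α) (h : IsFareyPair α a b) :
    ∃ a' b', IsFareyPair α a' b' ∧ a < a' := by
  obtain ⟨k, hk⟩ := exists_nat_gt ((1 - fract (b * α)) / fract (a * α))
  rw [div_lt_iff₀ (hα.natCast_mul h.pos_left.ne').fract_pos] at hk
  induction k generalizing b with
  | zero => simp only [Nat.cast_zero, zero_mul] at hk; linarith [fract_lt_one ((b : ℝ) * α)]
  | succ k ih =>
    rcases (h.fract_ne hα).lt_or_gt with hlt | hlt
    · refine ih (h.add_right hlt) ?_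
      push_cast at hk
      rw [Nat.cast_add, add_mul, fract_add_of_lt_one_sub hlt]
      linarith
    · have hb : 0 < b := by
        rw [Nat.pos_iff_ne_zero]
        rintro rfl
        simp only [CharP.cast_eq_zero, zero_mul, fract_zero, sub_zero] at hlt
        linarith [fract_lt_one ((a : ℝ) * α)]
      exact ⟨a + b, b, h.add_left hlt, by omega⟩

end IsFareyPair

theorem exists_isFareyPair_le_left_le_right {α : ℝ} (hα : Irrational α) (N : ℕ) :
    ∃ a b, IsFareyPair α a b ∧ N ≤ a ∧ a ≤ b := by
  suffices ∃ a b, IsFareyPair α a b ∧ N ≤ a by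
    obtain ⟨a, b, h, hN⟩ := this
    obtain ⟨a', b', h', ha', hab'⟩ := h.exists_left_le_right hα
    exact ⟨a', b', h', hN.trans ha', hab'⟩
  induction N with
  | zero => exact ⟨1, 0, IsFareyPair.one_zero α, Nat.zero_le 1⟩
  | succ N ih =>
    obtain ⟨a, b, h, hN⟩ := ih
    obtain ⟨a', b', h', ha'⟩ := h.exists_left_gt hα
    exact ⟨a', b', h', by omega⟩

theorem Irrational.infinite_setOf_fract_mul_lt_one_div {α : ℝ} (hα : Irrational α) :
    {n : ℕ | 0 < n ∧ fract (n * α) < 1 / n}.Infinite := by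
  refine Set.infinite_of_forall_exists_gt fun N => ?_
  obtain ⟨a, b, h, hN, hab⟩ := exists_isFareyPair_le_left_le_right hα (N + 1)
  have ha : (0 : ℝ) < a := by exact_mod_cast h.pos_left
  refine ⟨a, ⟨h.pos_left, ?_⟩, hN⟩
  rw [lt_div_iff₀ ha, mul_comm]
  exact h.mul_fract_lt_one hab

namespace Circle

theorem exp_two_pi_mul_pow (s : ℝ) (n : ℕ) :
    exp (2 * π * s) ^ n = exp (2 * π * fract (n * s)) := by
  rw [← exp_natCast_mul, exp_eq_exp]
  exact ⟨⌊n * s⌋, by linear_combination (-2 * π) * fract_add_floor ((n : ℝ) * s)⟩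

theorem irrational_of_exp_two_pi_mul_pow_ne_one {s : ℝ}
    (h : ∀ n : ℕ, 0 < n → exp (2 * π * s) ^ n ≠ 1) :
    Irrational s := by
  rintro ⟨q, rfl⟩
  refine h q.den q.pos ?_
  rw [← exp_natCast_mul, mul_left_comm, ← Rat.cast_natCast, ← Rat.cast_mul, Rat.den_mul_eq_num,
    Rat.cast_intCast, exp_two_pi_mul_int]

theorem arg_exp_two_pi_mul_pow {s : ℝ} {n : ℕ} (h : fract (n * s) < 1 / 2) :
    Complex.arg (exp (2 * π * s) ^ n : ℂ) = 2 * π * fract (n * s) := by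
  rw [← coe_pow, exp_two_pi_mul_pow]
  exact arg_exp (by nlinarith [pi_pos, fract_nonneg ((n : ℝ) * s)]) (by nlinarith [pi_pos])

end Circle

/-- For `γ ∈ 𝕋` not a root of unity, `t = 1/2 + Log(γ)/(2πi)` is irrational, there are
infinitely many `n` with `0 < Log(γ^n) < 2π/n`, and equivalently the fractional part of
`n·t` is less than `1/n` for infinitely many `n`. -/
theorem log_small_infinitely_often (γ : Circle) (h : ∀ n : ℕ, 0 < n → γ ^ n ≠ 1) :
    Irrational (1 / 2 + (Complex.log (γ : ℂ)).im / (2 * Real.pi)) ∧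
    {n : ℕ | 0 < n ∧ 0 < (Complex.log ((γ : ℂ) ^ n)).im ∧
      (Complex.log ((γ : ℂ) ^ n)).im < 2 * Real.pi / n}.Infinite ∧
    {n : ℕ | 0 < n ∧
      Int.fract ((n : ℝ) * (1 / 2 + (Complex.log (γ : ℂ)).im / (2 * Real.pi))) <
        1 / n}.Infinite := by
  simp only [Complex.log_im]
  set s := Complex.arg γ / (2 * π)
  have hγ : Circle.exp (2 * π * s) = γ := by
    rw [mul_div_cancel₀ _ two_pi_pos.ne', Circle.exp_arg]
  have hs : Irrational s := Circle.irrational_of_exp_two_pi_mul_pow_ne_one (hγ ▸ h)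
  have ht : Irrational (1 / 2 + s) := by simpa using hs.ratCast_add (1 / 2)
  refine ⟨ht, ?_, ht.infinite_setOf_fract_mul_lt_one_div⟩
  refine (hs.infinite_setOf_fract_mul_lt_one_div.sdiff (Set.finite_le_nat 1)).mono ?_
  rintro n ⟨⟨hn, hlt⟩, hn1⟩
  have hn2 : (2 : ℝ) ≤ n := by exact_mod_cast (not_le.mp hn1 : 1 < n)
  have hhalf : fract (n * s) < 1 / 2 := hlt.trans_le (one_div_le_one_div_of_le two_pos hn2)
  rw [← hγ, Set.mem_ofPred_eq, Circle.arg_exp_two_pi_mul_pow hhalf]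
  refine ⟨hn, mul_pos two_pi_pos (hs.natCast_mul hn.ne').fract_pos, ?_⟩
  rw [div_eq_mul_one_div]
  gcongr
end
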